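/- arXiv:1506.02649 — 9 statements merged into one kernel-verified Lean document; each statement's English description precedes it below -/
import Mathlib

section
/- Let A ∈ ℝ^{n×n} be positive definite, η > 0, and ρ ≥ 0. Let x₁, …, x_T ∈ ℝⁿ and g₁, …, g_T ∈ ℝᵖ with ‖g_t‖₂ ≤ ρ for all t. Let W* ∈ ℝ^{p×n}, W₁ = 0, and define iterates W_{t+1} = W_t − η g_t (A⁻¹ x_t)ᵀ with G_t = g_t x_tᵀ. Then Σ_{t=1}^{T} tr(G_tᵀ(W_t − W*)) ≤ (1/(2η)) · tr(A (W*)ᵀ W*) + (η ρ²/2) · tr(A⁻¹ Σ_{t=1}^{T} x_t x_tᵀ). -/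
open Matrix BigOperators

lemma aux_transpose_vecMulVec {m n : Type*} (a : m → ℝ) (b : n → ℝ) :
    (Matrix.vecMulVec a b)ᵀ = Matrix.vecMulVec b a := by
  ext i j; simp [Matrix.vecMulVec_apply, mul_comm]

lemma aux_mul_vecMulVec {l m n : Type*} [Fintype m] (M : Matrix l m ℝ) (a : m → ℝ)
    (b : n → ℝ) : M * Matrix.vecMulVec a b = Matrix.vecMulVec (M *ᵥ a) b := by
  ext i j
  simp [Matrix.mul_apply, Matrix.vecMulVec_apply, Matrix.mulVec, dotProduct,
    Finset.sum_mul, mul_assoc]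

lemma aux_vecMulVec_mul_vecMulVec {l m n : Type*} [Fintype m]
    (a : l → ℝ) (b c : m → ℝ) (d : n → ℝ) :
    Matrix.vecMulVec a b * Matrix.vecMulVec c d = (b ⬝ᵥ c) • Matrix.vecMulVec a d := by
  ext i j
  simp only [Matrix.mul_apply, Matrix.vecMulVec_apply, Matrix.smul_apply, dotProduct,
    smul_eq_mul, Finset.sum_mul]
  exact Finset.sum_congr rfl fun k _ => by ring

lemma aux_trace_vecMulVec {n : Type*} [Fintype n] (a b : n → ℝ) :
    (Matrix.vecMulVec a b).trace = a ⬝ᵥ b := by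
  simp [Matrix.trace, Matrix.diag, Matrix.vecMulVec_apply, dotProduct]

lemma aux_trace_nonneg {n p : ℕ} {A : Matrix (Fin n) (Fin n) ℝ} (hA : A.PosDef)
    (M : Matrix (Fin p) (Fin n) ℝ) : 0 ≤ (A * Mᵀ * M).trace := by
  rw [Matrix.trace_mul_cycle]
  have h : ∀ i, (M * A * Mᵀ) i i = (M i) ⬝ᵥ (A *ᵥ (M i)) := by
    intro i
    simp only [Matrix.mul_apply, Matrix.transpose_apply, dotProduct, Matrix.mulVec,
      Finset.sum_mul, Finset.mul_sum]
    rw [Finset.sum_comm]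
    exact Finset.sum_congr rfl fun k _ => Finset.sum_congr rfl fun j _ => by ring
  rw [Matrix.trace]
  refine Finset.sum_nonneg fun i _ => ?_
  rw [Matrix.diag_apply, h i]
  have := hA.posSemidef.dotProduct_mulVec_nonneg (M i)
  simpa using this

/-- Regret-type bound for conditioned SGD iterates:
if `W₁ = 0` and `W_{t+1} = W_t − η g_t (A⁻¹ x_t)ᵀ` with `‖g_t‖₂ ≤ ρ`, then
`Σ_t tr(G_tᵀ(W_t − W*)) ≤ (1/(2η)) tr(A (W*)ᵀ W*) + (ηρ²/2) tr(A⁻¹ Σ_t x_t x_tᵀ)`. -/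
theorem stmt1 {n p : ℕ} (T : ℕ)
    (A : Matrix (Fin n) (Fin n) ℝ) (hA : A.PosDef)
    (η ρ : ℝ) (hη : 0 < η) (hρ : 0 ≤ ρ)
    (x : Fin T → Fin n → ℝ) (g : Fin T → Fin p → ℝ)
    (hg : ∀ t : Fin T, Real.sqrt (∑ j, (g t j) ^ 2) ≤ ρ)
    (Wstar : Matrix (Fin p) (Fin n) ℝ)
    (W : ℕ → Matrix (Fin p) (Fin n) ℝ)
    (hW1 : W 0 = 0)
    (hWt : ∀ t : Fin T,
      W ((t : ℕ) + 1) = W (t : ℕ) - η • Matrix.vecMulVec (g t) (A⁻¹ *ᵥ x t))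
    (G : Fin T → Matrix (Fin p) (Fin n) ℝ)
    (hG : ∀ t, G t = Matrix.vecMulVec (g t) (x t)) :
    ∑ t : Fin T, ((G t)ᵀ * (W (t : ℕ) - Wstar)).trace
      ≤ (1 / (2 * η)) * (A * Wstarᵀ * Wstar).trace
        + (η * ρ ^ 2 / 2) * (A⁻¹ * ∑ t : Fin T, Matrix.vecMulVec (x t) (x t)).trace := by
  have hAT : Aᵀ = A := hA.isHermitian
  have hdet : IsUnit A.det := hA.det_pos.ne'.isUnit
  have hAinv : A * A⁻¹ = 1 := Matrix.mul_nonsing_inv A hdet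
  have hAv : ∀ t : Fin T, A *ᵥ (A⁻¹ *ᵥ x t) = x t := by
    intro t; rw [Matrix.mulVec_mulVec, hAinv, Matrix.one_mulVec]
  set φ : ℕ → ℝ := fun k => (A * (W k - Wstar)ᵀ * (W k - Wstar)).trace with hφ
  -- per-step identity
  have step : ∀ t : Fin T,
      ((G t)ᵀ * (W (t : ℕ) - Wstar)).trace
        = (φ t - φ ((t : ℕ) + 1)) / (2 * η)
          + (η / 2) * (∑ j, (g t j) ^ 2) * ((x t) ⬝ᵥ (A⁻¹ *ᵥ x t)) := by
    intro t
    set D := W (t : ℕ) - Wstar with hD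
    set v := A⁻¹ *ᵥ x t with hv
    set U := Matrix.vecMulVec (g t) v with hU
    have hnext : W ((t : ℕ) + 1) - Wstar = D - η • U := by
      rw [hWt t, hD, hU, hv]; abel
    have hGT : (G t)ᵀ = A * Uᵀ := by
      rw [hG t, aux_transpose_vecMulVec, hU, aux_transpose_vecMulVec,
        aux_mul_vecMulVec, hv, hAv t]
    have hsym : (A * Dᵀ * U).trace = (A * Uᵀ * D).trace := by
      rw [← Matrix.trace_transpose (A * Dᵀ * U)]
      have : (A * Dᵀ * U)ᵀ = Uᵀ * D * A := by
        rw [Matrix.transpose_mul, Matrix.transpose_mul, Matrix.transpose_transpose, hAT,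
          Matrix.mul_assoc]
      rw [this, Matrix.trace_mul_cycle]
    have hUU : (A * Uᵀ * U).trace = (∑ j, (g t j) ^ 2) * ((x t) ⬝ᵥ v) := by
      rw [Matrix.mul_assoc, hU, aux_transpose_vecMulVec, aux_vecMulVec_mul_vecMulVec,
        Matrix.mul_smul, Matrix.trace_smul, aux_mul_vecMulVec, hv, hAv t,
        aux_trace_vecMulVec]
      simp [dotProduct, pow_two]
    have hexp : φ ((t : ℕ) + 1)
        = φ (t : ℕ) - 2 * η * ((G t)ᵀ * D).trace
          + η ^ 2 * ((∑ j, (g t j) ^ 2) * ((x t) ⬝ᵥ v)) := by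
      have e1 : A * (D - η • U)ᵀ * (D - η • U)
          = A * Dᵀ * D - η • (A * Dᵀ * U) - η • (A * Uᵀ * D)
            + (η * η) • (A * Uᵀ * U) := by
        simp only [Matrix.transpose_sub, Matrix.transpose_smul, Matrix.mul_sub,
          Matrix.sub_mul, Matrix.mul_smul, Matrix.smul_mul, smul_smul, smul_sub, smul_add]
        abel
      have : φ ((t : ℕ) + 1) = (A * (D - η • U)ᵀ * (D - η • U)).trace := by
        rw [hφ]; simp only [hnext]
      rw [this, e1, Matrix.trace_add, Matrix.trace_sub, Matrix.trace_sub,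
        Matrix.trace_smul, Matrix.trace_smul, Matrix.trace_smul, hsym, hUU, hGT]
      rw [hφ]
      simp only [smul_eq_mul, ← hD]
      ring
    have hη' : (2 : ℝ) * η ≠ 0 := by positivity
    field_simp
    nlinarith [hexp]
  rw [Finset.sum_congr rfl fun t _ => step t]
  rw [Finset.sum_add_distrib]
  -- telescoping part
  have htel : ∑ t : Fin T, (φ (t : ℕ) - φ ((t : ℕ) + 1)) / (2 * η)
      = (φ 0 - φ T) / (2 * η) := by
    rw [← Finset.sum_div]
    congr 1
    rw [Fin.sum_univ_eq_sum_range (fun k => φ k - φ (k + 1))]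
    exact Finset.sum_range_sub' φ T
  have hφ0 : φ 0 = (A * Wstarᵀ * Wstar).trace := by
    rw [hφ]; simp [hW1, Matrix.transpose_neg, Matrix.neg_mul, Matrix.mul_neg]
  have hφT : 0 ≤ φ T := aux_trace_nonneg hA _
  have hRHS2 : (η * ρ ^ 2 / 2) * (A⁻¹ * ∑ t : Fin T, Matrix.vecMulVec (x t) (x t)).trace
      = ∑ t : Fin T, (η * ρ ^ 2 / 2) * ((x t) ⬝ᵥ (A⁻¹ *ᵥ x t)) := by
    rw [Matrix.mul_sum, Matrix.trace_sum, Finset.mul_sum]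
    refine Finset.sum_congr rfl fun t _ => ?_
    rw [aux_mul_vecMulVec, aux_trace_vecMulVec, dotProduct_comm]
  have hterm : ∀ t : Fin T,
      (η / 2) * (∑ j, (g t j) ^ 2) * ((x t) ⬝ᵥ (A⁻¹ *ᵥ x t))
        ≤ (η * ρ ^ 2 / 2) * ((x t) ⬝ᵥ (A⁻¹ *ᵥ x t)) := by
    intro t
    have hq : 0 ≤ (x t) ⬝ᵥ (A⁻¹ *ᵥ x t) := by
      have := hA.inv.posSemidef.dotProduct_mulVec_nonneg (x t); simpa using this
    have hg2 : (∑ j, (g t j) ^ 2) ≤ ρ ^ 2 := by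
      have hnn : 0 ≤ ∑ j, (g t j) ^ 2 :=
        Finset.sum_nonneg fun j _ => sq_nonneg _
      calc (∑ j, (g t j) ^ 2) = (Real.sqrt (∑ j, (g t j) ^ 2)) ^ 2 :=
            (Real.sq_sqrt hnn).symm
        _ ≤ ρ ^ 2 := pow_le_pow_left₀ (Real.sqrt_nonneg _) (hg t) 2
    have h1 : (η / 2) * (∑ j, (g t j) ^ 2) ≤ η * ρ ^ 2 / 2 := by nlinarith
    exact mul_le_mul_of_nonneg_right h1 hq
  have hsum2 : ∑ t : Fin T, (η / 2) * (∑ j, (g t j) ^ 2) * ((x t) ⬝ᵥ (A⁻¹ *ᵥ x t))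
      ≤ ∑ t : Fin T, (η * ρ ^ 2 / 2) * ((x t) ⬝ᵥ (A⁻¹ *ᵥ x t)) :=
    Finset.sum_le_sum fun t _ => hterm t
  rw [htel, hRHS2, hφ0]
  have h1 : ((A * Wstarᵀ * Wstar).trace - φ T) / (2 * η)
      ≤ 1 / (2 * η) * (A * Wstarᵀ * Wstar).trace := by
    rw [div_le_iff₀ (by positivity)]
    have : 1 / (2 * η) * (A * Wstarᵀ * Wstar).trace * (2 * η)
        = (A * Wstarᵀ * Wstar).trace := by field_simp
    rw [this]; linarith
  linarith [hsum2]
end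

section
/- Fix a positive definite matrix A ∈ ℝ^{n×n}. Let x₁,…,x_m ∈ ℝⁿ, and for each i let ℓ_{y_i} : ℝᵖ → ℝ be convex and ρ-Lipschitz. Let L(W) = (1/m) Σ_{i=1}^m ℓ_{y_i}(W x_i), let W* be a minimizer of L, and let C = (1/m) Σ_{i=1}^m x_i x_iᵀ. Run conditioned SGD for T steps starting from W₁ = 0: at each step t, draw i_t uniformly and independently from {1,…,m} and set W_{t+1} = W_t − η g_t (A⁻¹ x_{i_t})ᵀ, where g_t ∈ ℝᵖ is a subgradient of ℓ_{y_{i_t}} at W_t x_{i_t}. Let W̄ = (1/T) Σ_{t=1}^T W_t. Then E[L(W̄) − L(W*)] ≤ (1/(2ηT)) · tr(A (W*)ᵀ W*) + (η ρ²/2) · tr(A⁻¹ C), where the expectation is over the i.i.d. uniform random indices i₁,…,i_T. -/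
open Matrix BigOperators

lemma stmt2_trace_form {n p : ℕ} (A : Matrix (Fin n) (Fin n) ℝ)
    (U V : Matrix (Fin p) (Fin n) ℝ) :
    (A * Uᵀ * V).trace = ∑ j, (fun a => V j a) ⬝ᵥ (A *ᵥ fun b => U j b) := by
  simp only [Matrix.trace, Matrix.diag, Matrix.mul_apply, Matrix.transpose_apply,
    dotProduct, Matrix.mulVec, Finset.sum_mul, Finset.mul_sum]
  rw [Finset.sum_comm]
  exact Finset.sum_congr rfl fun j _ => Finset.sum_congr rfl fun a _ =>
    Finset.sum_congr rfl fun b _ => by ring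

lemma stmt2_trace_mul_vmv {n k : ℕ} (M : Matrix (Fin n) (Fin k) ℝ) (g : Fin k → ℝ)
    (w : Fin n → ℝ) :
    (M * Matrix.vecMulVec g w).trace = w ⬝ᵥ (M *ᵥ g) := by
  simp only [Matrix.trace, Matrix.diag, Matrix.mul_apply, Matrix.vecMulVec_apply,
    dotProduct, Matrix.mulVec, Finset.mul_sum]
  exact Finset.sum_congr rfl fun a _ => Finset.sum_congr rfl fun b _ => by ring

lemma stmt2_expand {n p : ℕ} (A : Matrix (Fin n) (Fin n) ℝ) (hAs : Aᵀ = A)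
    (U V : Matrix (Fin p) (Fin n) ℝ) (η : ℝ) :
    (A * (U - η • V)ᵀ * (U - η • V)).trace
      = (A * Uᵀ * U).trace - 2 * η * (A * Uᵀ * V).trace + η ^ 2 * (A * Vᵀ * V).trace := by
  have hsym : (A * Vᵀ * U).trace = (A * Uᵀ * V).trace := by
    conv_lhs => rw [← Matrix.trace_transpose]
    simp only [Matrix.transpose_mul, Matrix.transpose_transpose]
    rw [Matrix.trace_mul_comm, hAs, Matrix.mul_assoc]
    exact Matrix.trace_mul_comm V (A * Uᵀ)
  simp only [Matrix.transpose_sub, Matrix.transpose_smul, Matrix.sub_mul, Matrix.mul_sub,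
    Matrix.smul_mul, Matrix.mul_smul, Matrix.trace_sub, Matrix.trace_smul, smul_eq_mul]
  rw [hsym]; ring

lemma stmt2_sum_mulVec {n p T : ℕ} (Ws : Fin T → Matrix (Fin p) (Fin n) ℝ) (v : Fin n → ℝ) :
    ((T : ℝ)⁻¹ • ∑ t, Ws t) *ᵥ v = ∑ t, (T : ℝ)⁻¹ • (Ws t *ᵥ v) := by
  ext j
  simp only [Matrix.mulVec, dotProduct, Matrix.smul_apply, Finset.sum_apply, Pi.smul_apply,
    Matrix.sum_apply, smul_eq_mul, Finset.mul_sum, Finset.sum_mul]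
  rw [Finset.sum_comm]
  exact Finset.sum_congr rfl fun a _ => Finset.sum_congr rfl fun b _ => by ring

lemma stmt2_key {T m : ℕ} (t : Fin T) (F : (Fin T → Fin m) → Fin m → ℝ)
    (hF : ∀ ω i, F (Function.update ω t i) = F ω) :
    (m : ℝ) * ∑ ω : Fin T → Fin m, F ω (ω t) = ∑ ω : Fin T → Fin m, ∑ i, F ω i := by
  have he : Function.Involutive
      (fun ωi : (Fin T → Fin m) × Fin m => (Function.update ωi.1 t ωi.2, ωi.1 t)) := by
    rintro ⟨ω, i⟩
    simp [Function.update_idem]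
  have key := Fintype.sum_bijective _ he.bijective
      (fun ωi : (Fin T → Fin m) × Fin m => F ωi.1 (ωi.1 t))
      (fun ωi : (Fin T → Fin m) × Fin m => F ωi.1 ωi.2) ?_
  · calc (m : ℝ) * ∑ ω : Fin T → Fin m, F ω (ω t)
        = ∑ ωi : (Fin T → Fin m) × Fin m, F ωi.1 (ωi.1 t) := by
          rw [Fintype.sum_prod_type]
          simp only [Finset.sum_const, Finset.card_univ, Fintype.card_fin, nsmul_eq_mul]
          rw [Finset.mul_sum]
      _ = ∑ ωi : (Fin T → Fin m) × Fin m, F ωi.1 ωi.2 := key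
      _ = ∑ ω : Fin T → Fin m, ∑ i, F ω i := by rw [Fintype.sum_prod_type]
  · rintro ⟨ω, i⟩
    simp [hF]

/-- Lemma 1 of the paper, first bound. Conditioned SGD with a fixed
positive definite conditioner `A`, started from `W₁ = 0`, on the objective
`L(W) = (1/m) Σᵢ ℓᵢ(W xᵢ)` with convex `ρ`-Lipschitz losses, satisfies
`E[L(W̄) − L(W*)] ≤ (1/(2ηT)) tr(A (W*)ᵀ W*) + (ηρ²/2) tr(A⁻¹ C)`,
where the expectation is the average over all sequences `ω : Fin T → Fin m` of
i.i.d. uniform indices, `W̄ = (1/T) Σ_t W_t`, and `C = (1/m) Σᵢ xᵢ xᵢᵀ`.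
Subgradients are given by a selection `g W i` of a subgradient of `ℓᵢ` at `W xᵢ`. -/
theorem stmt2 {n p m : ℕ} (hm : 0 < m)
    (A : Matrix (Fin n) (Fin n) ℝ) (hA : A.PosDef)
    (x : Fin m → Fin n → ℝ) (ρ : ℝ)
    (ℓ : Fin m → (Fin p → ℝ) → ℝ)
    (hconv : ∀ i, ConvexOn ℝ Set.univ (ℓ i))
    (hlip : ∀ i, ∀ u v : Fin p → ℝ,
      |ℓ i u - ℓ i v| ≤ ρ * Real.sqrt (∑ j, (u j - v j) ^ 2))
    (L : Matrix (Fin p) (Fin n) ℝ → ℝ)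
    (hL : ∀ W, L W = (1 / (m : ℝ)) * ∑ i, ℓ i (W *ᵥ x i))
    (Wstar : Matrix (Fin p) (Fin n) ℝ)
    (hWstar : ∀ W, L Wstar ≤ L W)
    (C : Matrix (Fin n) (Fin n) ℝ)
    (hC : C = (1 / (m : ℝ)) • ∑ i, Matrix.vecMulVec (x i) (x i))
    (η : ℝ) (hη : 0 < η) (T : ℕ) (hT : 0 < T)
    (g : Matrix (Fin p) (Fin n) ℝ → Fin m → (Fin p → ℝ))
    (hg : ∀ W i, ∀ u : Fin p → ℝ,
      ℓ i (W *ᵥ x i) + ∑ j, g W i j * (u j - (W *ᵥ x i) j) ≤ ℓ i u)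
    (W : (Fin T → Fin m) → ℕ → Matrix (Fin p) (Fin n) ℝ)
    (hW0 : ∀ ω, W ω 0 = 0)
    (hWt : ∀ ω (t : Fin T),
      W ω ((t : ℕ) + 1)
        = W ω (t : ℕ)
          - η • Matrix.vecMulVec (g (W ω (t : ℕ)) (ω t)) (A⁻¹ *ᵥ x (ω t))) :
    (∑ ω : Fin T → Fin m,
        (L ((T : ℝ)⁻¹ • ∑ t : Fin T, W ω (t : ℕ)) - L Wstar)) / (m : ℝ) ^ T
      ≤ (1 / (2 * η * T)) * (A * Wstarᵀ * Wstar).trace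
        + (η * ρ ^ 2 / 2) * (A⁻¹ * C).trace := by
  have hmR : (0:ℝ) < (m:ℝ) := by exact_mod_cast hm
  have hTR : (0:ℝ) < (T:ℝ) := by exact_mod_cast hT
  have hMT : (0:ℝ) < (m:ℝ) ^ T := pow_pos hmR T
  have hAs : Aᵀ = A := by have h := hA.1; simp at h; exact h
  have hAinv : A * A⁻¹ = 1 :=
    Matrix.mul_nonsing_inv A (isUnit_iff_ne_zero.2 (ne_of_gt hA.det_pos))
  set q : Fin m → ℝ := fun i => x i ⬝ᵥ (A⁻¹ *ᵥ x i) with hq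
  set Φ : Matrix (Fin p) (Fin n) ℝ → ℝ := fun M => (A * Mᵀ * M).trace with hΦ
  have hw : ∀ i, A *ᵥ (A⁻¹ *ᵥ x i) = x i := by
    intro i
    rw [Matrix.mulVec_mulVec, hAinv, Matrix.one_mulVec]
  have hdot : ∀ w' r : Fin n → ℝ, w' ⬝ᵥ (A *ᵥ r) = (A *ᵥ w') ⬝ᵥ r := by
    intro w' r
    rw [Matrix.dotProduct_mulVec, ← Matrix.mulVec_transpose, hAs]
  have hΦnn : ∀ M, 0 ≤ Φ M := by
    intro M
    show 0 ≤ (A * Mᵀ * M).trace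
    rw [stmt2_trace_form]
    refine Finset.sum_nonneg fun j _ => ?_
    simpa using hA.posSemidef.dotProduct_mulVec_nonneg fun b => M j b
  have hqnn : ∀ i, 0 ≤ q i := by
    intro i
    show 0 ≤ x i ⬝ᵥ (A⁻¹ *ᵥ x i)
    simpa using hA.inv.posSemidef.dotProduct_mulVec_nonneg (x i)
  have hinner : ∀ (U : Matrix (Fin p) (Fin n) ℝ) (gv : Fin p → ℝ) (i : Fin m),
      (A * Uᵀ * Matrix.vecMulVec gv (A⁻¹ *ᵥ x i)).trace = gv ⬝ᵥ (U *ᵥ x i) := by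
    intro U gv i
    rw [stmt2_trace_form]
    refine Finset.sum_congr rfl fun j _ => ?_
    have h1 : (fun a => Matrix.vecMulVec gv (A⁻¹ *ᵥ x i) j a) ⬝ᵥ (A *ᵥ fun b => U j b)
        = gv j * ((A⁻¹ *ᵥ x i) ⬝ᵥ (A *ᵥ fun b => U j b)) := by
      simp [Matrix.vecMulVec_apply, dotProduct, Finset.mul_sum, mul_assoc]
    rw [h1, hdot, hw]
    simp [dotProduct, Matrix.mulVec, mul_comm]
  have hVV : ∀ (gv : Fin p → ℝ) (i : Fin m),
      (A * (Matrix.vecMulVec gv (A⁻¹ *ᵥ x i))ᵀ * Matrix.vecMulVec gv (A⁻¹ *ᵥ x i)).trace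
        = (∑ j, gv j ^ 2) * q i := by
    intro gv i
    rw [stmt2_trace_form, Finset.sum_mul]
    refine Finset.sum_congr rfl fun j _ => ?_
    simp only [Matrix.vecMulVec_apply]
    have e1 : (fun a => gv j * (A⁻¹ *ᵥ x i) a) = gv j • (A⁻¹ *ᵥ x i) := rfl
    rw [e1, smul_dotProduct, Matrix.mulVec_smul, dotProduct_smul,
      hdot, hw]
    show gv j * (gv j * q i) = gv j ^ 2 * q i
    ring
  have hgb : ∀ (M : Matrix (Fin p) (Fin n) ℝ) (i : Fin m), (∑ j, g M i j ^ 2) ≤ ρ ^ 2 := by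
    intro M i
    have h1 := hg M i ((M *ᵥ x i) + g M i)
    have h2 := hlip i ((M *ᵥ x i) + g M i) (M *ᵥ x i)
    simp only [Pi.add_apply, add_sub_cancel_left] at h1 h2
    have hsq : ∑ j, g M i j * g M i j = ∑ j, g M i j ^ 2 :=
      Finset.sum_congr rfl fun j _ => by ring
    rw [hsq] at h1
    have hs2nn : (0:ℝ) ≤ ∑ j, g M i j ^ 2 := Finset.sum_nonneg fun j _ => sq_nonneg _
    have key1 : (∑ j, g M i j ^ 2) ≤ ρ * Real.sqrt (∑ j, g M i j ^ 2) := by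
      have h3 := le_trans (le_abs_self _) h2
      linarith
    nlinarith [Real.sq_sqrt hs2nn, Real.sqrt_nonneg (∑ j, g M i j ^ 2),
      sq_nonneg (ρ - Real.sqrt (∑ j, g M i j ^ 2))]
  -- per-step inequality
  have step : ∀ (ω : Fin T → Fin m) (t : Fin T),
      ℓ (ω t) (W ω (t:ℕ) *ᵥ x (ω t)) - ℓ (ω t) (Wstar *ᵥ x (ω t))
        ≤ (Φ (W ω (t:ℕ) - Wstar) - Φ (W ω ((t:ℕ)+1) - Wstar)) / (2*η)
          + (η/2) * ρ^2 * q (ω t) := by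
    intro ω t
    set i := ω t with hi
    set U := W ω (t:ℕ) - Wstar with hU
    set gv := g (W ω (t:ℕ)) i with hgv
    set V := Matrix.vecMulVec gv (A⁻¹ *ᵥ x i) with hV
    have hrec : W ω ((t:ℕ)+1) - Wstar = U - η • V := by
      rw [hWt ω t, hU, hV]; abel
    have hexp : Φ (W ω ((t:ℕ)+1) - Wstar)
        = Φ U - 2*η*(gv ⬝ᵥ (U *ᵥ x i)) + η^2 * ((∑ j, gv j ^ 2) * q i) := by
      rw [hrec]
      show (A * (U - η • V)ᵀ * (U - η • V)).trace = _
      rw [stmt2_expand A hAs U V η, hinner U gv i, hVV gv i]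
    have hsub : ℓ i (W ω (t:ℕ) *ᵥ x i) - ℓ i (Wstar *ᵥ x i) ≤ gv ⬝ᵥ (U *ᵥ x i) := by
      have h1 := hg (W ω (t:ℕ)) i (Wstar *ᵥ x i)
      have h2 : gv ⬝ᵥ (U *ᵥ x i)
          = - ∑ j, gv j * ((Wstar *ᵥ x i) j - (W ω (t:ℕ) *ᵥ x i) j) := by
        rw [hU, Matrix.sub_mulVec]
        simp only [dotProduct, Pi.sub_apply, ← Finset.sum_neg_distrib]
        exact Finset.sum_congr rfl fun j _ => by ring
      rw [h2]
      linarith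
    have hgq : (∑ j, gv j ^ 2) * q i ≤ ρ^2 * q i :=
      mul_le_mul_of_nonneg_right (hgb _ i) (hqnn i)
    have h2η : (0:ℝ) < 2*η := by linarith
    have hfe : (Φ U - (Φ U - 2*η*(gv ⬝ᵥ (U *ᵥ x i))
          + η^2 * ((∑ j, gv j ^ 2) * q i))) / (2*η)
        = gv ⬝ᵥ (U *ᵥ x i) - (η/2) * ((∑ j, gv j ^ 2) * q i) := by
      field_simp
      ring
    rw [hexp, hfe]
    have hgq2 : (η/2) * ((∑ j, gv j ^ 2) * q i) ≤ (η/2) * (ρ^2 * q i) :=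
      mul_le_mul_of_nonneg_left hgq (by linarith)
    have : (η/2) * ρ^2 * q i = (η/2) * (ρ^2 * q i) := by ring
    linarith
  -- telescoping per trajectory
  have telescope : ∀ ω : Fin T → Fin m,
      ∑ t : Fin T, (ℓ (ω t) (W ω (t:ℕ) *ᵥ x (ω t)) - ℓ (ω t) (Wstar *ᵥ x (ω t)))
        ≤ (A * Wstarᵀ * Wstar).trace / (2*η) + (η/2) * ρ^2 * ∑ t : Fin T, q (ω t) := by
    intro ω
    have h1 : ∑ t : Fin T, (ℓ (ω t) (W ω (t:ℕ) *ᵥ x (ω t)) - ℓ (ω t) (Wstar *ᵥ x (ω t)))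
        ≤ ∑ t : Fin T, ((Φ (W ω (t:ℕ) - Wstar) - Φ (W ω ((t:ℕ)+1) - Wstar)) / (2*η)
            + (η/2) * ρ^2 * q (ω t)) := Finset.sum_le_sum fun t _ => step ω t
    have h2 : ∑ t : Fin T, ((Φ (W ω (t:ℕ) - Wstar) - Φ (W ω ((t:ℕ)+1) - Wstar)) / (2*η)
            + (η/2) * ρ^2 * q (ω t))
        = (Φ (W ω 0 - Wstar) - Φ (W ω T - Wstar)) / (2*η)
            + ∑ t : Fin T, (η/2) * ρ^2 * q (ω t) := by
      rw [Finset.sum_add_distrib, ← Finset.sum_div]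
      congr 2
      rw [Fin.sum_univ_eq_sum_range (fun k => Φ (W ω k - Wstar) - Φ (W ω (k+1) - Wstar))]
      exact Finset.sum_range_sub' _ T
    have h3 : Φ (W ω 0 - Wstar) = (A * Wstarᵀ * Wstar).trace := by
      rw [hW0]
      show (A * (0 - Wstar)ᵀ * (0 - Wstar)).trace = _
      simp [Matrix.transpose_neg, Matrix.mul_neg, Matrix.neg_mul]
    have h4 := hΦnn (W ω T - Wstar)
    have h2η : (0:ℝ) < 2*η := by linarith
    have h5 : (Φ (W ω 0 - Wstar) - Φ (W ω T - Wstar)) / (2*η)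
        ≤ (A * Wstarᵀ * Wstar).trace / (2*η) := by
      rw [h3]
      exact (div_le_div_iff_of_pos_right h2η).mpr (by linarith)
    have h6 : ∑ t : Fin T, (η/2) * ρ^2 * q (ω t) = (η/2) * ρ^2 * ∑ t : Fin T, q (ω t) := by
      rw [Finset.mul_sum]
    linarith [h1, h2 ▸ h1]
  -- W ω t depends only on coordinates before t
  have hdep : ∀ t : ℕ, t ≤ T → ∀ ω ω' : Fin T → Fin m,
      (∀ s : Fin T, (s:ℕ) < t → ω s = ω' s) → W ω t = W ω' t := by
    intro t
    induction t with
    | zero => intro _ ω ω' _; rw [hW0, hW0]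
    | succ t ih =>
      intro ht ω ω' hagree
      have htT : t < T := ht
      have h1 : W ω t = W ω' t :=
        ih (le_of_lt htT) ω ω' (fun s hs => hagree s (Nat.lt_succ_of_lt hs))
      have h2 : ω ⟨t, htT⟩ = ω' ⟨t, htT⟩ := hagree ⟨t, htT⟩ (Nat.lt_succ_self t)
      have e1 := hWt ω ⟨t, htT⟩
      have e2 := hWt ω' ⟨t, htT⟩
      simp only [Fin.val_mk] at e1 e2
      rw [e1, e2, h1, h2]
  -- key exchange lemma specialized
  have keyt : ∀ (t : Fin T) (G : Matrix (Fin p) (Fin n) ℝ → Fin m → ℝ),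
      (m:ℝ) * ∑ ω : Fin T → Fin m, G (W ω (t:ℕ)) (ω t)
        = ∑ ω : Fin T → Fin m, ∑ i, G (W ω (t:ℕ)) i := by
    intro t G
    refine stmt2_key t (fun ω i => G (W ω (t:ℕ)) i) ?_
    intro ω i
    have : W (Function.update ω t i) (t:ℕ) = W ω (t:ℕ) := by
      refine hdep (t:ℕ) (le_of_lt t.2) _ _ fun s hs => ?_
      have hne : s ≠ t := by
        intro h
        rw [h] at hs
        exact lt_irrefl _ hs
      exact Function.update_of_ne hne i ω
    simp only [this]
  -- expectation identities
  have hexp1 : ∀ t : Fin T,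
      ∑ ω : Fin T → Fin m, (ℓ (ω t) (W ω (t:ℕ) *ᵥ x (ω t)) - ℓ (ω t) (Wstar *ᵥ x (ω t)))
        = ∑ ω : Fin T → Fin m, (L (W ω (t:ℕ)) - L Wstar) := by
    intro t
    have hk := keyt t (fun M i => ℓ i (M *ᵥ x i) - ℓ i (Wstar *ᵥ x i))
    have hR : ∀ M : Matrix (Fin p) (Fin n) ℝ,
        ∑ i, (ℓ i (M *ᵥ x i) - ℓ i (Wstar *ᵥ x i)) = (m:ℝ) * (L M - L Wstar) := by
      intro M
      rw [Finset.sum_sub_distrib, hL M, hL Wstar]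
      field_simp
    have hk2 : (m:ℝ) * ∑ ω : Fin T → Fin m,
        (ℓ (ω t) (W ω (t:ℕ) *ᵥ x (ω t)) - ℓ (ω t) (Wstar *ᵥ x (ω t)))
        = (m:ℝ) * ∑ ω : Fin T → Fin m, (L (W ω (t:ℕ)) - L Wstar) := by
      rw [hk]
      rw [Finset.mul_sum]
      exact Finset.sum_congr rfl fun ω _ => hR (W ω (t:ℕ))
    exact mul_left_cancel₀ (ne_of_gt hmR) hk2
  have htrC : (A⁻¹ * C).trace = (1/(m:ℝ)) * ∑ i, q i := by
    rw [hC, Matrix.mul_smul, Matrix.trace_smul, Matrix.mul_sum, Matrix.trace_sum]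
    rw [smul_eq_mul]
    congr 1
    exact Finset.sum_congr rfl fun i _ => stmt2_trace_mul_vmv A⁻¹ (x i) (x i)
  have hexp2 : ∀ t : Fin T,
      ∑ ω : Fin T → Fin m, q (ω t) = (m:ℝ)^T * (A⁻¹ * C).trace := by
    intro t
    have hk := keyt t (fun _ i => q i)
    have hk2 : (m:ℝ) * ∑ ω : Fin T → Fin m, q (ω t)
        = (m:ℝ) * ((m:ℝ)^T * (A⁻¹ * C).trace) := by
      rw [hk]
      have : ∑ ω : Fin T → Fin m, ∑ i, q i = (m:ℝ)^T * ∑ i, q i := by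
        rw [Finset.sum_const, Finset.card_univ]
        simp [Fintype.card_fun, mul_comm]
      rw [this, htrC]
      field_simp
    exact mul_left_cancel₀ (ne_of_gt hmR) hk2
  -- Jensen per trajectory
  have hjen : ∀ ω : Fin T → Fin m,
      L ((T:ℝ)⁻¹ • ∑ t : Fin T, W ω (t:ℕ)) - L Wstar
        ≤ (T:ℝ)⁻¹ * ∑ t : Fin T, (L (W ω (t:ℕ)) - L Wstar) := by
    intro ω
    have hjen1 : ∀ i : Fin m,
        ℓ i (((T:ℝ)⁻¹ • ∑ t : Fin T, W ω (t:ℕ)) *ᵥ x i)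
          ≤ ∑ t : Fin T, (T:ℝ)⁻¹ * ℓ i (W ω (t:ℕ) *ᵥ x i) := by
      intro i
      rw [stmt2_sum_mulVec (fun t : Fin T => W ω (t:ℕ)) (x i)]
      exact (hconv i).map_sum_le (fun _ _ => by positivity)
        (by simp [Finset.card_univ]; field_simp) (fun _ _ => Set.mem_univ _)
    have hsum : L ((T:ℝ)⁻¹ • ∑ t : Fin T, W ω (t:ℕ))
        ≤ (T:ℝ)⁻¹ * ∑ t : Fin T, L (W ω (t:ℕ)) := by
      rw [hL]
      have h1 : ∑ i, ℓ i (((T:ℝ)⁻¹ • ∑ t : Fin T, W ω (t:ℕ)) *ᵥ x i)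
          ≤ ∑ i, ∑ t : Fin T, (T:ℝ)⁻¹ * ℓ i (W ω (t:ℕ) *ᵥ x i) :=
        Finset.sum_le_sum fun i _ => hjen1 i
      have h2 : (1/(m:ℝ)) * ∑ i, ∑ t : Fin T, (T:ℝ)⁻¹ * ℓ i (W ω (t:ℕ) *ᵥ x i)
          = (T:ℝ)⁻¹ * ∑ t : Fin T, L (W ω (t:ℕ)) := by
        rw [Finset.sum_comm]
        simp only [hL, Finset.mul_sum]
        refine Finset.sum_congr rfl fun t _ => Finset.sum_congr rfl fun i _ => by ring
      rw [← h2]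
      have hminv : (0:ℝ) < 1/(m:ℝ) := by positivity
      exact mul_le_mul_of_nonneg_left h1 (le_of_lt hminv)
    have hTinv : (T:ℝ)⁻¹ * ∑ t : Fin T, (L (W ω (t:ℕ)) - L Wstar)
        = (T:ℝ)⁻¹ * (∑ t : Fin T, L (W ω (t:ℕ))) - L Wstar := by
      rw [Finset.sum_sub_distrib, Finset.sum_const, Finset.card_univ, Fintype.card_fin,
        nsmul_eq_mul, mul_sub]
      field_simp
    rw [hTinv]
    linarith
  -- final assembly
  have main1 : ∑ ω : Fin T → Fin m,
      (L ((T:ℝ)⁻¹ • ∑ t : Fin T, W ω (t:ℕ)) - L Wstar)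
      ≤ (T:ℝ)⁻¹ * ∑ t : Fin T, ∑ ω : Fin T → Fin m, (L (W ω (t:ℕ)) - L Wstar) := by
    calc ∑ ω : Fin T → Fin m, (L ((T:ℝ)⁻¹ • ∑ t : Fin T, W ω (t:ℕ)) - L Wstar)
        ≤ ∑ ω : Fin T → Fin m, (T:ℝ)⁻¹ * ∑ t : Fin T, (L (W ω (t:ℕ)) - L Wstar) :=
          Finset.sum_le_sum fun ω _ => hjen ω
      _ = (T:ℝ)⁻¹ * ∑ t : Fin T, ∑ ω : Fin T → Fin m, (L (W ω (t:ℕ)) - L Wstar) := by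
          rw [← Finset.mul_sum, Finset.sum_comm]
  have main2 : ∑ t : Fin T, ∑ ω : Fin T → Fin m, (L (W ω (t:ℕ)) - L Wstar)
      ≤ (m:ℝ)^T * ((A * Wstarᵀ * Wstar).trace / (2*η))
        + (η/2) * ρ^2 * ((T:ℝ) * ((m:ℝ)^T * (A⁻¹ * C).trace)) := by
    calc ∑ t : Fin T, ∑ ω : Fin T → Fin m, (L (W ω (t:ℕ)) - L Wstar)
        = ∑ t : Fin T, ∑ ω : Fin T → Fin m,
            (ℓ (ω t) (W ω (t:ℕ) *ᵥ x (ω t)) - ℓ (ω t) (Wstar *ᵥ x (ω t))) :=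
          (Finset.sum_congr rfl fun t _ => (hexp1 t).symm)
      _ = ∑ ω : Fin T → Fin m, ∑ t : Fin T,
            (ℓ (ω t) (W ω (t:ℕ) *ᵥ x (ω t)) - ℓ (ω t) (Wstar *ᵥ x (ω t))) :=
          by rw [Finset.sum_comm]
      _ ≤ ∑ ω : Fin T → Fin m,
            ((A * Wstarᵀ * Wstar).trace / (2*η) + (η/2) * ρ^2 * ∑ t : Fin T, q (ω t)) :=
          Finset.sum_le_sum fun ω _ => telescope ω
      _ = (m:ℝ)^T * ((A * Wstarᵀ * Wstar).trace / (2*η))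
            + (η/2) * ρ^2 * ∑ t : Fin T, ∑ ω : Fin T → Fin m, q (ω t) := by
          rw [Finset.sum_add_distrib, Finset.sum_const, Finset.card_univ]
          simp only [Fintype.card_fun, Fintype.card_fin, nsmul_eq_mul, Nat.cast_pow]
          rw [← Finset.mul_sum, Finset.sum_comm]
      _ = (m:ℝ)^T * ((A * Wstarᵀ * Wstar).trace / (2*η))
            + (η/2) * ρ^2 * ((T:ℝ) * ((m:ℝ)^T * (A⁻¹ * C).trace)) := by
          congr 1
          congr 1
          rw [Finset.sum_congr rfl fun t _ => hexp2 t, Finset.sum_const, Finset.card_univ,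
            Fintype.card_fin, nsmul_eq_mul]
  have final : ∑ ω : Fin T → Fin m,
      (L ((T:ℝ)⁻¹ • ∑ t : Fin T, W ω (t:ℕ)) - L Wstar)
      ≤ (T:ℝ)⁻¹ * ((m:ℝ)^T * ((A * Wstarᵀ * Wstar).trace / (2*η))
          + (η/2) * ρ^2 * ((T:ℝ) * ((m:ℝ)^T * (A⁻¹ * C).trace))) := by
    refine le_trans main1 ?_
    exact mul_le_mul_of_nonneg_left main2 (by positivity)
  rw [div_le_iff₀ hMT]
  refine le_trans final (le_of_eq ?_)
  field_simp
end

section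
/- In the setting of conditioned SGD, assume the correlation matrix C = (1/m) Σ_{i=1}^m x_i x_iᵀ is positive definite, and run the algorithm with the conditioner A = C^{1/2} (the positive definite square root of C) and learning rate η = σ/(ρ√T), where σ ≥ ‖W*‖_spectral. Then E[L(W̄) − L(W*)] ≤ (σρ/√T) · tr(C^{1/2}). -/
open Matrix BigOperators

section Aux

lemma trace_vmv_mul {p n : ℕ} (gv : Fin p → ℝ) (u : Fin n → ℝ) (P : Matrix (Fin n) (Fin p) ℝ) :
    (vecMulVec gv u * P).trace = gv ⬝ᵥ (Pᵀ *ᵥ u) := by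
  simp only [Matrix.trace, Matrix.diag, Matrix.mul_apply, vecMulVec_apply, dotProduct,
    Matrix.mulVec, Matrix.transpose_apply]
  apply Finset.sum_congr rfl; intro j _
  rw [Finset.mul_sum]
  apply Finset.sum_congr rfl; intro a _; ring

lemma vmv_mulVec {p n : ℕ} (gv : Fin p → ℝ) (u : Fin n → ℝ) (w : Fin n → ℝ) :
    vecMulVec gv u *ᵥ w = (u ⬝ᵥ w) • gv := by
  funext j
  simp only [Matrix.mulVec, vecMulVec_apply, dotProduct, Pi.smul_apply, smul_eq_mul,
    Finset.sum_mul]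
  exact Finset.sum_congr rfl fun a _ => by ring

lemma quad_expand {p n : ℕ} (M : Matrix (Fin p) (Fin n) ℝ) (A : Matrix (Fin n) (Fin n) ℝ)
    (hAs : Aᵀ = A) (η : ℝ) (gv : Fin p → ℝ) (u : Fin n → ℝ) :
    ((M - η • vecMulVec gv u) * A * (M - η • vecMulVec gv u)ᵀ).trace
      = (M * A * Mᵀ).trace - 2*η*(gv ⬝ᵥ (M *ᵥ (A *ᵥ u)))
        + η^2 * (gv ⬝ᵥ gv) * (u ⬝ᵥ (A *ᵥ u)) := by
  have hcross : ∀ N : Matrix (Fin p) (Fin n) ℝ,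
      (M * A * Nᵀ).trace = (N * A * Mᵀ).trace := by
    intro N
    rw [← Matrix.trace_transpose (M * A * Nᵀ)]
    simp [Matrix.transpose_mul, Matrix.mul_assoc, hAs]
  have h1 : (vecMulVec gv u * A * Mᵀ).trace = gv ⬝ᵥ (M *ᵥ (A *ᵥ u)) := by
    rw [Matrix.mul_assoc, trace_vmv_mul]
    rw [Matrix.transpose_mul, Matrix.transpose_transpose, hAs, ← Matrix.mulVec_mulVec]
  have h2 : (vecMulVec gv u * A * (vecMulVec gv u)ᵀ).trace
      = (gv ⬝ᵥ gv) * (u ⬝ᵥ (A *ᵥ u)) := by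
    rw [Matrix.mul_assoc, trace_vmv_mul, Matrix.transpose_mul, Matrix.transpose_transpose, hAs]
    rw [← Matrix.mulVec_mulVec, vmv_mulVec, dotProduct_smul]
    simp [mul_comm]
  simp only [Matrix.transpose_sub, Matrix.sub_mul, Matrix.mul_sub, Matrix.trace_sub]
  rw [show (M * A * (η • vecMulVec gv u)ᵀ).trace = ((η • vecMulVec gv u) * A * Mᵀ).trace from
    hcross _]
  simp only [Matrix.transpose_smul, Matrix.smul_mul, Matrix.mul_smul, Matrix.trace_smul,
    smul_eq_mul, h1, h2]
  ring

lemma herm_transpose {n : ℕ} {A : Matrix (Fin n) (Fin n) ℝ} (h : A.IsHermitian) : Aᵀ = A := by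
  have h' := h
  rwa [Matrix.IsHermitian, Matrix.conjTranspose_eq_transpose_of_trivial] at h'

lemma trace_MAMt {p n : ℕ} (M : Matrix (Fin p) (Fin n) ℝ) (A : Matrix (Fin n) (Fin n) ℝ) :
    (M * A * Mᵀ).trace = ∑ j, (fun a => M j a) ⬝ᵥ (A *ᵥ fun a => M j a) := by
  simp only [Matrix.trace, Matrix.diag, Matrix.mul_apply, Matrix.transpose_apply,
    dotProduct, Matrix.mulVec]
  apply Finset.sum_congr rfl; intro j _
  simp only [Finset.sum_mul, Finset.mul_sum]
  rw [Finset.sum_comm]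
  apply Finset.sum_congr rfl; intro a _
  apply Finset.sum_congr rfl; intro b _; ring

lemma trace_MAMt_nonneg {p n : ℕ} (M : Matrix (Fin p) (Fin n) ℝ) {A : Matrix (Fin n) (Fin n) ℝ}
    (hA : A.PosSemidef) : 0 ≤ (M * A * Mᵀ).trace := by
  rw [trace_MAMt]
  apply Finset.sum_nonneg
  intro j _
  simpa using hA.dotProduct_mulVec_nonneg (fun a => M j a)

lemma trace_NNt {p n : ℕ} (N : Matrix (Fin p) (Fin n) ℝ) :
    (N * Nᵀ).trace = ∑ j, ∑ a, (N j a)^2 := by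
  simp [Matrix.trace, Matrix.diag, Matrix.mul_apply, Matrix.transpose_apply, sq]

lemma sq_of_sqrt_le {X Y σ : ℝ} (hX : 0 ≤ X) (hY : 0 ≤ Y) (hσ : 0 ≤ σ)
    (h : Real.sqrt X ≤ σ * Real.sqrt Y) : X ≤ σ^2 * Y := by
  nlinarith [Real.sq_sqrt hX, Real.sq_sqrt hY, Real.sqrt_nonneg X, Real.sqrt_nonneg Y]

lemma D0_bound {p n : ℕ} (Wstar : Matrix (Fin p) (Fin n) ℝ) (A B : Matrix (Fin n) (Fin n) ℝ)
    (hB : Bᵀ = B) (hBB : B * B = A) (σ : ℝ) (hσ0 : 0 ≤ σ)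
    (hσ : ∀ v : Fin n → ℝ,
      Real.sqrt (∑ j, ((Wstar *ᵥ v) j) ^ 2) ≤ σ * Real.sqrt (∑ i, (v i) ^ 2)) :
    (Wstar * A * Wstarᵀ).trace ≤ σ^2 * A.trace := by
  have key : ∀ v : Fin n → ℝ, (∑ j, ((Wstar *ᵥ v) j)^2) ≤ σ^2 * ∑ i, (v i)^2 := by
    intro v
    exact sq_of_sqrt_le (Finset.sum_nonneg fun j _ => sq_nonneg _)
      (Finset.sum_nonneg fun j _ => sq_nonneg _) hσ0 (hσ v)
  have h1 : Wstar * A * Wstarᵀ = (Wstar * B) * (Wstar * B)ᵀ := by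
    rw [Matrix.transpose_mul, hB, ← hBB]
    simp [Matrix.mul_assoc]
  rw [h1, trace_NNt]
  have h2 : ∀ a, ∑ j, ((Wstar * B) j a)^2 ≤ σ^2 * ∑ b, (B b a)^2 := by
    intro a
    have : ∀ j, (Wstar * B) j a = (Wstar *ᵥ (fun b => B b a)) j := by
      intro j; simp [Matrix.mul_apply, Matrix.mulVec, dotProduct]
    simp only [this]
    exact key _
  calc ∑ j, ∑ a, ((Wstar * B) j a)^2 = ∑ a, ∑ j, ((Wstar * B) j a)^2 := Finset.sum_comm
    _ ≤ ∑ a, σ^2 * ∑ b, (B b a)^2 := Finset.sum_le_sum fun a _ => h2 a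
    _ = σ^2 * A.trace := by
        rw [← Finset.mul_sum, ← hBB]
        congr 1
        simp only [Matrix.trace, Matrix.diag, Matrix.mul_apply, sq]
        rw [Finset.sum_comm]
        apply Finset.sum_congr rfl; intro a _
        apply Finset.sum_congr rfl; intro b _
        rw [show B a b = Bᵀ b a from rfl, hB]

lemma sum_mulVec' {p n T : ℕ} (Ws : Fin T → Matrix (Fin p) (Fin n) ℝ) (v : Fin n → ℝ) :
    (∑ t, Ws t) *ᵥ v = ∑ t, Ws t *ᵥ v := by
  funext j
  simp only [Matrix.mulVec, dotProduct, Finset.sum_apply, Matrix.sum_apply, Finset.sum_mul]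
  rw [Finset.sum_comm]

end Aux

/-- Theorem 1 of the paper. Conditioned SGD with the conditioner
`A = C^{1/2}` (the positive definite square root of the positive definite
correlation matrix `C`) and learning rate `η = σ/(ρ√T)`, where `σ ≥ ‖W*‖_spectral`,
satisfies `E[L(W̄) − L(W*)] ≤ (σρ/√T) tr(C^{1/2})`. -/
theorem stmt4 {n p m : ℕ} (hm : 0 < m)
    (x : Fin m → Fin n → ℝ) (ρ : ℝ) (hρ : 0 < ρ)
    (ℓ : Fin m → (Fin p → ℝ) → ℝ)
    (hconv : ∀ i, ConvexOn ℝ Set.univ (ℓ i))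
    (hlip : ∀ i, ∀ u v : Fin p → ℝ,
      |ℓ i u - ℓ i v| ≤ ρ * Real.sqrt (∑ j, (u j - v j) ^ 2))
    (L : Matrix (Fin p) (Fin n) ℝ → ℝ)
    (hL : ∀ W, L W = (1 / (m : ℝ)) * ∑ i, ℓ i (W *ᵥ x i))
    (Wstar : Matrix (Fin p) (Fin n) ℝ)
    (hWstar : ∀ W, L Wstar ≤ L W)
    (σ : ℝ)
    (hσ : ∀ v : Fin n → ℝ,
      Real.sqrt (∑ j, ((Wstar *ᵥ v) j) ^ 2) ≤ σ * Real.sqrt (∑ i, (v i) ^ 2))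
    (C : Matrix (Fin n) (Fin n) ℝ)
    (hC : C = (1 / (m : ℝ)) • ∑ i, Matrix.vecMulVec (x i) (x i))
    (hCpd : C.PosDef)
    (A : Matrix (Fin n) (Fin n) ℝ)
    (hA : A.PosDef) (hAsq : A * A = C)  -- `A = C^{1/2}`
    (T : ℕ) (hT : 0 < T)
    (η : ℝ) (hη : η = σ / (ρ * Real.sqrt T))
    (g : Matrix (Fin p) (Fin n) ℝ → Fin m → (Fin p → ℝ))
    (hg : ∀ W i, ∀ u : Fin p → ℝ,
      ℓ i (W *ᵥ x i) + ∑ j, g W i j * (u j - (W *ᵥ x i) j) ≤ ℓ i u)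
    (W : (Fin T → Fin m) → ℕ → Matrix (Fin p) (Fin n) ℝ)
    (hW0 : ∀ ω, W ω 0 = 0)
    (hWt : ∀ ω (t : Fin T),
      W ω ((t : ℕ) + 1)
        = W ω (t : ℕ)
          - η • Matrix.vecMulVec (g (W ω (t : ℕ)) (ω t)) (A⁻¹ *ᵥ x (ω t))) :
    (∑ ω : Fin T → Fin m,
        (L ((T : ℝ)⁻¹ • ∑ t : Fin T, W ω (t : ℕ)) - L Wstar)) / (m : ℝ) ^ T
      ≤ (σ * ρ / Real.sqrt T) * A.trace := by
  classical
  have hm' : (0:ℝ) < m := by exact_mod_cast hm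
  have hmT : (0:ℝ) < (m:ℝ)^T := pow_pos hm' T
  have hT' : (0:ℝ) < T := by exact_mod_cast hT
  have hsT : 0 < Real.sqrt T := Real.sqrt_pos.mpr hT'
  -- degenerate case n = 0
  rcases Nat.eq_zero_or_pos n with hn | hn
  · subst hn
    have hx0 : ∀ (M : Matrix (Fin p) (Fin 0) ℝ) (v : Fin 0 → ℝ), M *ᵥ v = 0 := by
      intro M v; funext j
      simp [Matrix.mulVec, dotProduct]
    have hLconst : ∀ M, L M = L Wstar := by
      intro M; rw [hL, hL]
      simp only [hx0]
    have hzero : (∑ ω : Fin T → Fin m,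
        (L ((T : ℝ)⁻¹ • ∑ t : Fin T, W ω (t : ℕ)) - L Wstar)) = 0 := by
      apply Finset.sum_eq_zero; intro ω _
      rw [hLconst]; ring
    rw [hzero]
    have htr0 : A.trace = 0 := by simp [Matrix.trace]
    rw [htr0, mul_zero, zero_div]
  -- σ ≥ 0
  have hσ0 : 0 ≤ σ := by
    by_contra hneg
    push_neg at hneg
    have h1 := hσ (fun _ => 1)
    have h2 : (0:ℝ) < Real.sqrt (∑ i : Fin n, ((1:ℝ)) ^ 2) := by
      rw [Real.sqrt_pos]
      simp only [one_pow, Finset.sum_const, Finset.card_univ, Fintype.card_fin, nsmul_eq_mul,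
        mul_one]
      exact_mod_cast hn
    nlinarith [Real.sqrt_nonneg (∑ j, ((Wstar *ᵥ fun _ => (1:ℝ)) j) ^ 2)]
  rcases eq_or_lt_of_le hσ0 with hσz | hσpos
  · -- σ = 0 case
    have hη0 : η = 0 := by rw [hη, ← hσz, zero_div]
    have hWzero : ∀ ω (k : ℕ), k ≤ T → W ω k = 0 := by
      intro ω k
      induction k with
      | zero => intro _; exact hW0 ω
      | succ k ih =>
        intro hk
        have hkT : k < T := hk
        have hstep := hWt ω ⟨k, hkT⟩
        simp only [Fin.val_mk] at hstep
        rw [hstep, ih (Nat.le_of_lt hkT), hη0]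
        simp
    have hWstar0 : ∀ v : Fin n → ℝ, Wstar *ᵥ v = 0 := by
      intro v
      have h1 := hσ v
      rw [← hσz, zero_mul] at h1
      have h2 : Real.sqrt (∑ j, ((Wstar *ᵥ v) j) ^ 2) = 0 :=
        le_antisymm h1 (Real.sqrt_nonneg _)
      have h3 : (∑ j, ((Wstar *ᵥ v) j) ^ 2) = 0 := by
        have := Real.sqrt_eq_zero'.mp h2
        have h4 : (0:ℝ) ≤ ∑ j, ((Wstar *ᵥ v) j) ^ 2 :=
          Finset.sum_nonneg fun j _ => sq_nonneg _
        linarith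
      funext j
      have := (Finset.sum_eq_zero_iff_of_nonneg (fun j _ => sq_nonneg ((Wstar *ᵥ v) j))).mp h3
        j (Finset.mem_univ j)
      exact pow_eq_zero_iff two_ne_zero |>.mp this
    have hzero : (∑ ω : Fin T → Fin m,
        (L ((T : ℝ)⁻¹ • ∑ t : Fin T, W ω (t : ℕ)) - L Wstar)) = 0 := by
      apply Finset.sum_eq_zero; intro ω _
      have h1 : (∑ t : Fin T, W ω (t : ℕ)) = 0 := by
        apply Finset.sum_eq_zero; intro t _
        exact hWzero ω t (Nat.le_of_lt t.isLt)
      rw [h1, smul_zero, hL, hL]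
      have h2 : ∀ i, Wstar *ᵥ x i = (0 : Matrix (Fin p) (Fin n) ℝ) *ᵥ x i := by
        intro i; rw [hWstar0, Matrix.zero_mulVec]
      simp only [h2]
      ring
    rw [hzero, zero_div, ← hσz, zero_mul, zero_div, zero_mul]
  -- main case: σ > 0

  have hη0 : 0 < η := by rw [hη]; positivity
  have hAs : Aᵀ = A := herm_transpose hA.1
  have hdetA : IsUnit A.det := hA.det_pos.ne'.isUnit
  -- the subgradients are bounded by ρ
  have hgg : ∀ (Wm : Matrix (Fin p) (Fin n) ℝ) (i : Fin m),
      (g Wm i) ⬝ᵥ (g Wm i) ≤ ρ^2 := by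
    intro Wm i
    set gv := g Wm i with hgv
    have h1 := hg Wm i (Wm *ᵥ x i + gv)
    have h2 : ∑ j, gv j * ((Wm *ᵥ x i + gv) j - (Wm *ᵥ x i) j) = ∑ j, gv j ^ 2 := by
      apply Finset.sum_congr rfl; intro j _
      simp [sq]
    have h3 := hlip i (Wm *ᵥ x i + gv) (Wm *ᵥ x i)
    have h4 : (∑ j, ((Wm *ᵥ x i + gv) j - (Wm *ᵥ x i) j) ^ 2) = ∑ j, gv j ^ 2 := by
      apply Finset.sum_congr rfl; intro j _; simp
    rw [h4] at h3
    have hs0 : (0:ℝ) ≤ ∑ j, gv j ^ 2 := Finset.sum_nonneg fun j _ => sq_nonneg _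
    have hs2 : (Real.sqrt (∑ j, gv j ^ 2)) ^ 2 = ∑ j, gv j ^ 2 := Real.sq_sqrt hs0
    have h5 : ∑ j, gv j ^ 2 ≤ ρ * Real.sqrt (∑ j, gv j ^ 2) := by
      rw [h2] at h1
      calc ∑ j, gv j ^ 2 ≤ ℓ i (Wm *ᵥ x i + gv) - ℓ i (Wm *ᵥ x i) := by linarith
        _ ≤ |ℓ i (Wm *ᵥ x i + gv) - ℓ i (Wm *ᵥ x i)| := le_abs_self _
        _ ≤ ρ * Real.sqrt (∑ j, gv j ^ 2) := h3
    have h6 : gv ⬝ᵥ gv = ∑ j, gv j ^ 2 := by simp [dotProduct, sq]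
    rw [h6]
    nlinarith [Real.sqrt_nonneg (∑ j, gv j ^ 2), sq_nonneg (Real.sqrt (∑ j, gv j ^ 2) - ρ)]
  -- W ω k depends only on the first k coordinates of ω
  have hdep : ∀ (k : ℕ), k ≤ T → ∀ ω ω' : Fin T → Fin m,
      (∀ s : Fin T, (s:ℕ) < k → ω s = ω' s) → W ω k = W ω' k := by
    intro k
    induction k with
    | zero => intro _ ω ω' _; rw [hW0, hW0]
    | succ k ih =>
      intro hk ω ω' hss
      have hkT : k < T := hk
      have hWk : W ω k = W ω' k :=
        ih (Nat.le_of_lt hkT) ω ω' (fun s hs => hss s (Nat.lt_succ_of_lt hs))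
      have hfk : ω ⟨k, hkT⟩ = ω' ⟨k, hkT⟩ := hss ⟨k, hkT⟩ (Nat.lt_succ_self k)
      have e1 := hWt ω ⟨k, hkT⟩
      have e2 := hWt ω' ⟨k, hkT⟩
      simp only [Fin.val_mk] at e1 e2
      rw [e1, e2, hWk, hfk]
  -- exchange lemma: expectation over the `t`-th coordinate
  have hexch : ∀ (t : Fin T) (h : Matrix (Fin p) (Fin n) ℝ → Fin m → ℝ),
      (m:ℝ) * ∑ ω : Fin T → Fin m, h (W ω (t:ℕ)) (ω t)
        = ∑ ω : Fin T → Fin m, ∑ i, h (W ω (t:ℕ)) i := by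
    intro t h
    have split : ∀ (F : (Fin T → Fin m) → ℝ), ∑ ω, F ω
        = ∑ r : {j : Fin T // j ≠ t} → Fin m, ∑ a : Fin m,
            F ((Equiv.piSplitAt t fun _ => Fin m).symm (a, r)) := by
      intro F
      rw [← Equiv.sum_comp (Equiv.piSplitAt t fun _ => Fin m).symm F, Fintype.sum_prod_type]
      exact Finset.sum_comm
    have hWindep : ∀ (r : {j : Fin T // j ≠ t} → Fin m) (a : Fin m),
        W ((Equiv.piSplitAt t fun _ => Fin m).symm (a, r)) (t:ℕ)
          = W ((Equiv.piSplitAt t fun _ => Fin m).symm (⟨0, hm⟩, r)) (t:ℕ) := by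
      intro r a
      apply hdep (t:ℕ) (Nat.le_of_lt t.isLt)
      intro s hs
      have hst : s ≠ t := by
        intro hcontra
        rw [hcontra] at hs
        exact lt_irrefl _ hs
      simp [Equiv.piSplitAt_symm_apply, hst]
    have hat : ∀ (r : {j : Fin T // j ≠ t} → Fin m) (a : Fin m),
        ((Equiv.piSplitAt t fun _ => Fin m).symm (a, r)) t = a := by
      intro r a; simp [Equiv.piSplitAt_symm_apply]
    rw [split (fun ω => h (W ω (t:ℕ)) (ω t)), split (fun ω => ∑ i, h (W ω (t:ℕ)) i),
      Finset.mul_sum]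
    apply Finset.sum_congr rfl; intro r _
    simp only [hWindep r, hat r]
    rw [Finset.sum_const, Finset.card_univ, Fintype.card_fin, nsmul_eq_mul]
  -- quadratic form of A⁻¹ is nonnegative
  have hq0 : ∀ i, (0:ℝ) ≤ x i ⬝ᵥ (A⁻¹ *ᵥ x i) := by
    intro i
    simpa using (hA.inv).posSemidef.dotProduct_mulVec_nonneg (x i)
  -- trace identity
  have htrace : (∑ i, x i ⬝ᵥ (A⁻¹ *ᵥ x i)) = (m:ℝ) * A.trace := by
    have hAC : A⁻¹ * C = A := by
      rw [← hAsq, ← Matrix.mul_assoc, Matrix.nonsing_inv_mul A hdetA, Matrix.one_mul]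
    have h1 : (A⁻¹ * C).trace = A.trace := by rw [hAC]
    rw [hC, Matrix.mul_smul, Matrix.trace_smul, Finset.mul_sum, Matrix.trace_sum] at h1
    have h2 : ∀ i, (A⁻¹ * vecMulVec (x i) (x i)).trace = x i ⬝ᵥ (A⁻¹ *ᵥ x i) := by
      intro i
      rw [Matrix.trace_mul_comm, trace_vmv_mul, Matrix.transpose_nonsing_inv, hAs]
    simp only [h2, smul_eq_mul] at h1
    rw [← h1]
    field_simp
  -- the potential function
  set D : (Fin T → Fin m) → ℕ → ℝ :=
    fun ω k => (((W ω k) - Wstar) * A * ((W ω k) - Wstar)ᵀ).trace with hDdef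
  -- one-step inequality
  have step : ∀ (ω : Fin T → Fin m) (t : Fin T),
      2*η*(ℓ (ω t) (W ω (t:ℕ) *ᵥ x (ω t)) - ℓ (ω t) (Wstar *ᵥ x (ω t)))
        ≤ D ω (t:ℕ) - D ω ((t:ℕ)+1) + η^2 * ρ^2 * (x (ω t) ⬝ᵥ (A⁻¹ *ᵥ x (ω t))) := by
    intro ω t
    have hAu : A *ᵥ (A⁻¹ *ᵥ x (ω t)) = x (ω t) := by
      rw [Matrix.mulVec_mulVec, Matrix.mul_nonsing_inv A hdetA, Matrix.one_mulVec]
    have hrearr : W ω (t:ℕ) - η • vecMulVec (g (W ω (t:ℕ)) (ω t)) (A⁻¹ *ᵥ x (ω t)) - Wstar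
        = (W ω (t:ℕ) - Wstar) - η • vecMulVec (g (W ω (t:ℕ)) (ω t)) (A⁻¹ *ᵥ x (ω t)) := by
      abel
    have hD : D ω ((t:ℕ)+1) = D ω (t:ℕ)
        - 2*η*((g (W ω (t:ℕ)) (ω t)) ⬝ᵥ ((W ω (t:ℕ) - Wstar) *ᵥ x (ω t)))
        + η^2 * ((g (W ω (t:ℕ)) (ω t)) ⬝ᵥ (g (W ω (t:ℕ)) (ω t)))
            * ((A⁻¹ *ᵥ x (ω t)) ⬝ᵥ x (ω t)) := by
      simp only [hDdef]
      rw [hWt ω t, hrearr, quad_expand _ A hAs, hAu]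
    have hgrad : ℓ (ω t) (W ω (t:ℕ) *ᵥ x (ω t)) - ℓ (ω t) (Wstar *ᵥ x (ω t))
        ≤ (g (W ω (t:ℕ)) (ω t)) ⬝ᵥ ((W ω (t:ℕ) - Wstar) *ᵥ x (ω t)) := by
      have h1 := hg (W ω (t:ℕ)) (ω t) (Wstar *ᵥ x (ω t))
      have h2 : (g (W ω (t:ℕ)) (ω t)) ⬝ᵥ ((W ω (t:ℕ) - Wstar) *ᵥ x (ω t))
          = - ∑ j, g (W ω (t:ℕ)) (ω t) j
              * ((Wstar *ᵥ x (ω t)) j - (W ω (t:ℕ) *ᵥ x (ω t)) j) := by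
        rw [Matrix.sub_mulVec, ← Finset.sum_neg_distrib]
        simp only [dotProduct, Pi.sub_apply]
        apply Finset.sum_congr rfl; intro j _; ring
      rw [h2]
      linarith
    have hq := hq0 (ω t)
    have hggt := hgg (W ω (t:ℕ)) (ω t)
    have hcomm : (A⁻¹ *ᵥ x (ω t)) ⬝ᵥ x (ω t) = x (ω t) ⬝ᵥ (A⁻¹ *ᵥ x (ω t)) :=
      dotProduct_comm _ _
    rw [hcomm] at hD
    have e1 : 2*η*(ℓ (ω t) (W ω (t:ℕ) *ᵥ x (ω t)) - ℓ (ω t) (Wstar *ᵥ x (ω t)))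
        ≤ 2*η*((g (W ω (t:ℕ)) (ω t)) ⬝ᵥ ((W ω (t:ℕ) - Wstar) *ᵥ x (ω t))) := by
      apply mul_le_mul_of_nonneg_left hgrad
      positivity
    have e2 : η^2 * ((g (W ω (t:ℕ)) (ω t)) ⬝ᵥ (g (W ω (t:ℕ)) (ω t)))
          * (x (ω t) ⬝ᵥ (A⁻¹ *ᵥ x (ω t)))
        ≤ η^2 * ρ^2 * (x (ω t) ⬝ᵥ (A⁻¹ *ᵥ x (ω t))) := by
      apply mul_le_mul_of_nonneg_right _ hq
      exact mul_le_mul_of_nonneg_left hggt (sq_nonneg η)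
    linarith
  -- square root of A
  obtain ⟨Bm, hBsa, -, hBB⟩ := open MatrixOrder in
    CFC.exists_sqrt_of_isSelfAdjoint_of_quasispectrumRestricts (a := A)
      hA.posSemidef.isHermitian (QuasispectrumRestricts.nnreal_of_nonneg hA.posSemidef.nonneg)
  have hBsym : Bmᵀ = Bm := herm_transpose hBsa
  -- per-trajectory bound
  have perω : ∀ ω : Fin T → Fin m,
      2*η*(∑ t : Fin T, (ℓ (ω t) (W ω (t:ℕ) *ᵥ x (ω t)) - ℓ (ω t) (Wstar *ᵥ x (ω t))))
        ≤ σ^2 * A.trace + η^2*ρ^2 * ∑ t : Fin T, (x (ω t) ⬝ᵥ (A⁻¹ *ᵥ x (ω t))) := by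
    intro ω
    have htel : ∑ t : Fin T, (D ω (t:ℕ) - D ω ((t:ℕ)+1)) = D ω 0 - D ω T := by
      rw [Fin.sum_univ_eq_sum_range (fun k => D ω k - D ω (k+1)) T]
      exact Finset.sum_range_sub' (D ω) T
    have hDT : 0 ≤ D ω T := trace_MAMt_nonneg _ hA.posSemidef
    have hD0b : D ω 0 ≤ σ^2 * A.trace := by
      have hd : D ω 0 = (Wstar * A * Wstarᵀ).trace := by
        simp only [hDdef]
        rw [hW0, zero_sub]
        simp [Matrix.transpose_neg, Matrix.neg_mul, Matrix.mul_neg]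
      rw [hd]
      exact D0_bound Wstar A Bm hBsym hBB σ hσ0 hσ
    calc 2*η*(∑ t : Fin T, (ℓ (ω t) (W ω (t:ℕ) *ᵥ x (ω t)) - ℓ (ω t) (Wstar *ᵥ x (ω t))))
        = ∑ t : Fin T, 2*η*(ℓ (ω t) (W ω (t:ℕ) *ᵥ x (ω t)) - ℓ (ω t) (Wstar *ᵥ x (ω t))) := by
          rw [Finset.mul_sum]
      _ ≤ ∑ t : Fin T, (D ω (t:ℕ) - D ω ((t:ℕ)+1)
            + η^2 * ρ^2 * (x (ω t) ⬝ᵥ (A⁻¹ *ᵥ x (ω t)))) :=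
          Finset.sum_le_sum fun t _ => step ω t
      _ = (D ω 0 - D ω T) + η^2*ρ^2 * ∑ t : Fin T, (x (ω t) ⬝ᵥ (A⁻¹ *ᵥ x (ω t))) := by
          rw [Finset.sum_add_distrib, htel, ← Finset.mul_sum]
      _ ≤ σ^2 * A.trace + η^2*ρ^2 * ∑ t : Fin T, (x (ω t) ⬝ᵥ (A⁻¹ *ᵥ x (ω t))) := by
          linarith
  -- expectation identities
  have hLsum : ∀ t : Fin T,
      ∑ ω : Fin T → Fin m, (ℓ (ω t) (W ω (t:ℕ) *ᵥ x (ω t)) - ℓ (ω t) (Wstar *ᵥ x (ω t)))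
        = ∑ ω : Fin T → Fin m, (L (W ω (t:ℕ)) - L Wstar) := by
    intro t
    apply mul_left_cancel₀ hm'.ne'
    calc (m:ℝ) * ∑ ω : Fin T → Fin m,
          (ℓ (ω t) (W ω (t:ℕ) *ᵥ x (ω t)) - ℓ (ω t) (Wstar *ᵥ x (ω t)))
        = ∑ ω : Fin T → Fin m, ∑ i, (ℓ i (W ω (t:ℕ) *ᵥ x i) - ℓ i (Wstar *ᵥ x i)) :=
          hexch t (fun Wm i => ℓ i (Wm *ᵥ x i) - ℓ i (Wstar *ᵥ x i))
      _ = (m:ℝ) * ∑ ω : Fin T → Fin m, (L (W ω (t:ℕ)) - L Wstar) := by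
          rw [Finset.mul_sum]
          apply Finset.sum_congr rfl; intro ω _
          rw [Finset.sum_sub_distrib, hL (W ω (t:ℕ)), hL Wstar]
          field_simp
  have hqsum : ∀ t : Fin T,
      ∑ ω : Fin T → Fin m, (x (ω t) ⬝ᵥ (A⁻¹ *ᵥ x (ω t))) = (m:ℝ)^T * A.trace := by
    intro t
    apply mul_left_cancel₀ hm'.ne'
    calc (m:ℝ) * ∑ ω : Fin T → Fin m, (x (ω t) ⬝ᵥ (A⁻¹ *ᵥ x (ω t)))
        = ∑ ω : Fin T → Fin m, ∑ i, (x i ⬝ᵥ (A⁻¹ *ᵥ x i)) :=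
          hexch t (fun _ i => x i ⬝ᵥ (A⁻¹ *ᵥ x i))
      _ = ∑ ω : Fin T → Fin m, (m:ℝ) * A.trace := by
          apply Finset.sum_congr rfl; intro ω _; exact htrace
      _ = (m:ℝ) * ((m:ℝ)^T * A.trace) := by
          rw [Finset.sum_const, Finset.card_univ, Fintype.card_fun, Fintype.card_fin,
            Fintype.card_fin, nsmul_eq_mul]
          push_cast
          ring
  -- global bound on the sum of losses
  have hSL : 2*η*(∑ ω : Fin T → Fin m, ∑ t : Fin T, (L (W ω (t:ℕ)) - L Wstar))
      ≤ (m:ℝ)^T * (σ^2 * A.trace) + η^2*ρ^2 * ((T:ℝ) * ((m:ℝ)^T * A.trace)) := by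
    have h1 : (∑ ω : Fin T → Fin m, ∑ t : Fin T, (L (W ω (t:ℕ)) - L Wstar))
        = ∑ ω : Fin T → Fin m, ∑ t : Fin T,
            (ℓ (ω t) (W ω (t:ℕ) *ᵥ x (ω t)) - ℓ (ω t) (Wstar *ᵥ x (ω t))) := by
      rw [Finset.sum_comm]
      conv_rhs => rw [Finset.sum_comm]
      exact Finset.sum_congr rfl fun t _ => (hLsum t).symm
    have h2 : ∑ ω : Fin T → Fin m, ∑ t : Fin T, (x (ω t) ⬝ᵥ (A⁻¹ *ᵥ x (ω t)))
        = (T:ℝ) * ((m:ℝ)^T * A.trace) := by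
      rw [Finset.sum_comm]
      calc ∑ t : Fin T, ∑ ω : Fin T → Fin m, (x (ω t) ⬝ᵥ (A⁻¹ *ᵥ x (ω t)))
          = ∑ t : Fin T, (m:ℝ)^T * A.trace := Finset.sum_congr rfl fun t _ => hqsum t
        _ = (T:ℝ) * ((m:ℝ)^T * A.trace) := by
            rw [Finset.sum_const, Finset.card_univ, Fintype.card_fin, nsmul_eq_mul]
    rw [h1]
    calc 2*η*(∑ ω : Fin T → Fin m, ∑ t : Fin T,
            (ℓ (ω t) (W ω (t:ℕ) *ᵥ x (ω t)) - ℓ (ω t) (Wstar *ᵥ x (ω t))))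
        = ∑ ω : Fin T → Fin m, 2*η*(∑ t : Fin T,
            (ℓ (ω t) (W ω (t:ℕ) *ᵥ x (ω t)) - ℓ (ω t) (Wstar *ᵥ x (ω t)))) := by
          rw [Finset.mul_sum]
      _ ≤ ∑ ω : Fin T → Fin m, (σ^2 * A.trace
            + η^2*ρ^2 * ∑ t : Fin T, (x (ω t) ⬝ᵥ (A⁻¹ *ᵥ x (ω t)))) :=
          Finset.sum_le_sum fun ω _ => perω ω
      _ = (m:ℝ)^T * (σ^2 * A.trace)
            + η^2*ρ^2 * (∑ ω : Fin T → Fin m, ∑ t : Fin T, (x (ω t) ⬝ᵥ (A⁻¹ *ᵥ x (ω t)))) := by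
          rw [Finset.sum_add_distrib, Finset.sum_const, Finset.card_univ, Fintype.card_fun,
            Fintype.card_fin, Fintype.card_fin, nsmul_eq_mul, ← Finset.mul_sum]
          push_cast
          ring
      _ = (m:ℝ)^T * (σ^2 * A.trace) + η^2*ρ^2 * ((T:ℝ) * ((m:ℝ)^T * A.trace)) := by
          rw [h2]
  -- Jensen step
  have hJ : ∀ ω : Fin T → Fin m,
      L ((T:ℝ)⁻¹ • ∑ t : Fin T, W ω (t:ℕ)) - L Wstar
        ≤ (T:ℝ)⁻¹ * ∑ t : Fin T, (L (W ω (t:ℕ)) - L Wstar) := by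
    intro ω
    have hmv : ∀ i, ((T:ℝ)⁻¹ • ∑ t : Fin T, W ω (t:ℕ)) *ᵥ x i
        = ∑ t : Fin T, (T:ℝ)⁻¹ • (W ω (t:ℕ) *ᵥ x i) := by
      intro i
      rw [Matrix.smul_mulVec, sum_mulVec', Finset.smul_sum]
    have hconvle : ∀ i, ℓ i (((T:ℝ)⁻¹ • ∑ t : Fin T, W ω (t:ℕ)) *ᵥ x i)
        ≤ ∑ t : Fin T, (T:ℝ)⁻¹ * ℓ i (W ω (t:ℕ) *ᵥ x i) := by
      intro i
      rw [hmv i]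
      have hj := (hconv i).map_sum_le (t := Finset.univ) (w := fun _ : Fin T => (T:ℝ)⁻¹)
        (p := fun t : Fin T => W ω (t:ℕ) *ᵥ x i) (fun _ _ => by positivity)
        (by rw [Finset.sum_const, Finset.card_univ, Fintype.card_fin, nsmul_eq_mul]
            field_simp)
        (fun _ _ => Set.mem_univ _)
      simpa [smul_eq_mul] using hj
    have hle : (1/(m:ℝ)) * ∑ i, ℓ i (((T:ℝ)⁻¹ • ∑ t : Fin T, W ω (t:ℕ)) *ᵥ x i)
        ≤ (1/(m:ℝ)) * ∑ i, ∑ t : Fin T, (T:ℝ)⁻¹ * ℓ i (W ω (t:ℕ) *ᵥ x i) := by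
      apply mul_le_mul_of_nonneg_left _ (by positivity)
      exact Finset.sum_le_sum fun i _ => hconvle i
    have heq : (1/(m:ℝ)) * (∑ i, ∑ t : Fin T, (T:ℝ)⁻¹ * ℓ i (W ω (t:ℕ) *ᵥ x i))
          - (1/(m:ℝ)) * ∑ i, ℓ i (Wstar *ᵥ x i)
        = (T:ℝ)⁻¹ * ∑ t : Fin T,
            ((1/(m:ℝ)) * ∑ i, ℓ i (W ω (t:ℕ) *ᵥ x i) - (1/(m:ℝ)) * ∑ i, ℓ i (Wstar *ᵥ x i)) := by
      rw [Finset.sum_comm]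
      simp only [← Finset.mul_sum]
      rw [Finset.sum_sub_distrib]
      simp only [← Finset.mul_sum]
      rw [Finset.sum_const, Finset.card_univ, Fintype.card_fin, nsmul_eq_mul]
      have hTne : (T:ℝ) ≠ 0 := hT'.ne'
      field_simp
    have hfinal : (T:ℝ)⁻¹ * ∑ t : Fin T,
          ((1/(m:ℝ)) * ∑ i, ℓ i (W ω (t:ℕ) *ᵥ x i) - (1/(m:ℝ)) * ∑ i, ℓ i (Wstar *ᵥ x i))
        = (T:ℝ)⁻¹ * ∑ t : Fin T, (L (W ω (t:ℕ)) - L Wstar) := by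
      congr 1
      apply Finset.sum_congr rfl; intro t _
      rw [hL (W ω (t:ℕ)), hL Wstar]
    have hgoal' : (1/(m:ℝ)) * ∑ i, ℓ i (((T:ℝ)⁻¹ • ∑ t : Fin T, W ω (t:ℕ)) *ᵥ x i)
        - (1/(m:ℝ)) * ∑ i, ℓ i (Wstar *ᵥ x i)
        ≤ (T:ℝ)⁻¹ * ∑ t : Fin T, (L (W ω (t:ℕ)) - L Wstar) := by
      linarith [hle, heq.le, heq.ge, hfinal.le, hfinal.ge]
    calc L ((T:ℝ)⁻¹ • ∑ t : Fin T, W ω (t:ℕ)) - L Wstar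
        = (1/(m:ℝ)) * ∑ i, ℓ i (((T:ℝ)⁻¹ • ∑ t : Fin T, W ω (t:ℕ)) *ᵥ x i)
          - (1/(m:ℝ)) * ∑ i, ℓ i (Wstar *ᵥ x i) := by rw [hL, hL]
      _ ≤ _ := hgoal'
  -- put everything together
  have hX : (∑ ω : Fin T → Fin m, (L ((T:ℝ)⁻¹ • ∑ t : Fin T, W ω (t:ℕ)) - L Wstar))
      ≤ (T:ℝ)⁻¹ * ∑ ω : Fin T → Fin m, ∑ t : Fin T, (L (W ω (t:ℕ)) - L Wstar) := by
    calc (∑ ω : Fin T → Fin m, (L ((T:ℝ)⁻¹ • ∑ t : Fin T, W ω (t:ℕ)) - L Wstar))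
        ≤ ∑ ω : Fin T → Fin m, (T:ℝ)⁻¹ * ∑ t : Fin T, (L (W ω (t:ℕ)) - L Wstar) :=
          Finset.sum_le_sum fun ω _ => hJ ω
      _ = (T:ℝ)⁻¹ * ∑ ω : Fin T → Fin m, ∑ t : Fin T, (L (W ω (t:ℕ)) - L Wstar) := by
          rw [Finset.mul_sum]
  have hSL2 : (∑ ω : Fin T → Fin m, ∑ t : Fin T, (L (W ω (t:ℕ)) - L Wstar))
      ≤ ((m:ℝ)^T * (σ^2 * A.trace) + η^2*ρ^2 * ((T:ℝ) * ((m:ℝ)^T * A.trace))) / (2*η) := by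
    rw [le_div_iff₀ (by positivity)]
    linarith [hSL]
  have harith : (T:ℝ)⁻¹ *
        (((m:ℝ)^T * (σ^2 * A.trace) + η^2*ρ^2 * ((T:ℝ) * ((m:ℝ)^T * A.trace))) / (2*η))
      = ((σ * ρ / Real.sqrt T) * A.trace) * (m:ℝ)^T := by
    rw [hη]
    set s := Real.sqrt (T:ℝ) with hsdef
    have hss : s * s = (T:ℝ) := Real.mul_self_sqrt hT'.le
    rw [show ((T:ℝ)) = s*s from hss.symm]
    have hs0 : s ≠ 0 := hsT.ne'
    field_simp
    ring
  rw [div_le_iff₀ hmT]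
  calc (∑ ω : Fin T → Fin m, (L ((T:ℝ)⁻¹ • ∑ t : Fin T, W ω (t:ℕ)) - L Wstar))
      ≤ (T:ℝ)⁻¹ * ∑ ω : Fin T → Fin m, ∑ t : Fin T, (L (W ω (t:ℕ)) - L Wstar) := hX
    _ ≤ (T:ℝ)⁻¹ *
        (((m:ℝ)^T * (σ^2 * A.trace) + η^2*ρ^2 * ((T:ℝ) * ((m:ℝ)^T * A.trace))) / (2*η)) :=
        mul_le_mul_of_nonneg_left hSL2 (by positivity)
    _ = ((σ * ρ / Real.sqrt T) * A.trace) * (m:ℝ)^T := harith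
end

section
/- Let C ∈ ℝ^{n×n} be symmetric positive definite. Then over all symmetric positive definite matrices A ∈ ℝ^{n×n}, the quantity tr(A) + tr(A⁻¹ C) is minimized by A = C^{1/2}, and the minimum value is 2·tr(C^{1/2}). In particular, for every symmetric positive definite A, tr(A) + tr(A⁻¹ C) ≥ 2·tr(C^{1/2}). -/
open Matrix BigOperators


lemma myTraceNonneg {n : ℕ} {M : Matrix (Fin n) (Fin n) ℝ} (hM : M.PosSemidef) :
    0 ≤ M.trace := by
  rw [Matrix.trace]
  apply Finset.sum_nonneg
  intro i _
  exact hM.diag_nonneg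


/-- For a symmetric positive definite `C` with positive definite
square root `S` (i.e. `S * S = C`), the quantity `tr(A) + tr(A⁻¹ C)` over symmetric
positive definite `A` is minimized by `A = S = C^{1/2}`, with minimum value
`2 tr(C^{1/2})`: every such `A` satisfies `tr(A) + tr(A⁻¹ C) ≥ 2 tr(C^{1/2})`,
and `A = S` attains the value `2 tr(S)`. -/
theorem stmt5 {n : ℕ}
    (C S : Matrix (Fin n) (Fin n) ℝ)
    (hC : C.PosDef) (hS : S.PosDef) (hSsq : S * S = C) :
    (∀ A : Matrix (Fin n) (Fin n) ℝ, A.PosDef →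
        2 * S.trace ≤ A.trace + (A⁻¹ * C).trace)
      ∧ S.trace + (S⁻¹ * C).trace = 2 * S.trace := by

  constructor
  · intro A hA
    have hAdet : IsUnit A.det := hA.det_pos.ne'.isUnit
    have hinvA : A⁻¹ * A = 1 := nonsing_inv_mul A hAdet
    have hAinv : A * A⁻¹ = 1 := mul_nonsing_inv A hAdet
    have hAsym : Aᵀ = A := hA.isHermitian.eq
    have hSsym : Sᵀ = S := hS.isHermitian.eq
    have hexp : A⁻¹ * (A - S) * (A - S)
        = A - S - A⁻¹ * S * A + A⁻¹ * C := by
      rw [← hSsq]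
      have h2 : A⁻¹ * (A - S) = 1 - A⁻¹ * S := by rw [mul_sub, hinvA]
      rw [h2]
      noncomm_ring
    have htr : (A⁻¹ * (A - S) * (A - S)).trace
        = A.trace + (A⁻¹ * C).trace - 2 * S.trace := by
      rw [hexp]
      have h1 : (A⁻¹ * S * A).trace = S.trace := by
        rw [trace_mul_comm, ← mul_assoc, hAinv, one_mul]
      rw [trace_add, trace_sub, trace_sub, h1]
      ring
    have hpsd : (A⁻¹ * (A - S) * (A - S)).trace
        = ((A - S) * A⁻¹ * (A - S)ᴴ).trace := by
      rw [trace_mul_comm (A⁻¹ * (A - S)) (A - S)]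
      rw [(hA.isHermitian.sub hS.isHermitian).eq, mul_assoc]
    have h0 : 0 ≤ (A⁻¹ * (A - S) * (A - S)).trace := by
      rw [hpsd]
      exact myTraceNonneg (hA.inv.posSemidef.mul_mul_conjTranspose_same (A - S))
    linarith [htr ▸ h0]
  · have hSdet : IsUnit S.det := hS.det_pos.ne'.isUnit
    have : S⁻¹ * C = S := by
      rw [← hSsq, ← mul_assoc, nonsing_inv_mul S hSdet, one_mul]
    rw [this]; ring
end

section
/- Let C ∈ ℝ^{n×n} be symmetric positive definite. Then min over symmetric positive definite M with tr(M) ≤ 1 of tr(M⁻¹ C) equals (tr(C^{1/2}))², and the minimum is attained by M* = (tr(C^{1/2}))⁻¹ · C^{1/2}. In particular, for every symmetric positive definite M with tr(M) ≤ 1, tr(M⁻¹ C) ≥ (tr(C^{1/2}))². -/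
open Matrix BigOperators
open scoped MatrixOrder

private lemma posdef_trace_pos' {n : ℕ} {M : Matrix (Fin n) (Fin n) ℝ}
    (hM : M.PosDef) (i : Fin n) : 0 < M i i := by
  have h := hM.dotProduct_mulVec_pos (x := Pi.single i 1) (by
    intro h
    have := congrFun h i
    simp at this)
  simpa [mulVec_single, dotProduct, Pi.single_apply, Finset.sum_ite_eq] using h

private lemma posdef_trace_pos {n : ℕ} {M : Matrix (Fin n) (Fin n) ℝ}
    (hM : M.PosDef) (hn : 0 < n) : 0 < M.trace := by
  rw [Matrix.trace]
  exact Finset.sum_pos (fun i _ => posdef_trace_pos' hM i)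
    (by simpa [Finset.univ_nonempty_iff] using Fin.pos_iff_nonempty.mp hn)

private lemma posdef_smul {n : ℕ} {M : Matrix (Fin n) (Fin n) ℝ} {c : ℝ}
    (hM : M.PosDef) (hc : 0 < c) : (c • M).PosDef := by
  refine Matrix.PosDef.of_dotProduct_mulVec_pos ?_ ?_
  · have h1 : Mᴴ = M := hM.1
    show (c • M)ᴴ = c • M
    rw [Matrix.conjTranspose_smul, h1, star_trivial]
  · intro x hx
    have := hM.dotProduct_mulVec_pos hx
    simp only [smul_mulVec, dotProduct_smul]
    positivity

private lemma trace_mul_eq_sum {n : ℕ} (A B : Matrix (Fin n) (Fin n) ℝ) :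
    (A * B).trace = ∑ p : Fin n × Fin n, A p.1 p.2 * B p.2 p.1 := by
  rw [Fintype.sum_prod_type]
  simp [Matrix.trace, Matrix.diag, Matrix.mul_apply]

/-- Lemma 6 of the paper. For a symmetric positive definite `C`
with positive definite square root `S` (i.e. `S * S = C`),
`min { tr(M⁻¹ C) : M symmetric positive definite, tr(M) ≤ 1 } = (tr(C^{1/2}))²`,
attained by `M* = (tr(C^{1/2}))⁻¹ • C^{1/2}`. In particular every feasible `M`
satisfies `tr(M⁻¹ C) ≥ (tr(C^{1/2}))²`. -/
theorem stmt6 {n : ℕ}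
    (C S : Matrix (Fin n) (Fin n) ℝ)
    (hC : C.PosDef) (hS : S.PosDef) (hSsq : S * S = C) :
    (∀ M : Matrix (Fin n) (Fin n) ℝ, M.PosDef → M.trace ≤ 1 →
        S.trace ^ 2 ≤ (M⁻¹ * C).trace)
      ∧ ((S.trace)⁻¹ • S).PosDef
      ∧ ((S.trace)⁻¹ • S).trace ≤ 1
      ∧ ((((S.trace)⁻¹ • S))⁻¹ * C).trace = S.trace ^ 2 := by
  -- symmetry facts
  have hSsymm : Sᵀ = S := by
    rw [← conjTranspose_eq_transpose_of_trivial]; exact hS.1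
  rcases Nat.eq_zero_or_pos n with hn | hn
  · subst hn
    refine ⟨fun M hM hMt => ?_, ⟨?_, ?_⟩, ?_, ?_⟩
    · simp [Matrix.trace]
    · ext i; exact absurd i.2 (by simp)
    · intro x hx; exact absurd (Subsingleton.elim x 0) hx
    · simp [Matrix.trace]
    · simp [Matrix.trace]
  have htrS : 0 < S.trace := posdef_trace_pos hS hn
  have hSdet : IsUnit S.det := isUnit_iff_ne_zero.2 hS.det_pos.ne'
  refine ⟨fun M hM hMt => ?_, posdef_smul hS (by positivity), ?_, ?_⟩
  · -- main inequality
    set T := CFC.sqrt M with hTdef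
    have hT : T.PosSemidef := (CFC.sqrt_nonneg M).posSemidef
    have hTT : T * T = M := CFC.sqrt_mul_sqrt_self M hM.posSemidef.nonneg
    have hTsymm : Tᵀ = T := by
      rw [← conjTranspose_eq_transpose_of_trivial]; exact hT.1
    have hTdet : IsUnit T.det := by
      have h : T.det * T.det = M.det := by rw [← det_mul, hTT]
      have : T.det ≠ 0 := by
        intro h0; rw [h0, mul_zero] at h; exact hM.det_pos.ne (by rw [h])
      exact isUnit_iff_ne_zero.2 this
    set B := T⁻¹ * S with hBdef
    -- tr S = tr (T * B)
    have h1 : S.trace = (T * B).trace := by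
      rw [hBdef, ← Matrix.mul_assoc, mul_nonsing_inv T hTdet, Matrix.one_mul]
    -- Cauchy-Schwarz
    have hCS := Finset.sum_mul_sq_le_sq_mul_sq Finset.univ
      (fun p : Fin n × Fin n => T p.1 p.2) (fun p : Fin n × Fin n => B p.2 p.1)
    have hTB : (T * B).trace = ∑ p : Fin n × Fin n, T p.1 p.2 * B p.2 p.1 :=
      trace_mul_eq_sum T B
    have hTsum : (∑ p : Fin n × Fin n, T p.1 p.2 ^ 2) = M.trace := by
      rw [← hTT, trace_mul_eq_sum]
      refine Finset.sum_congr rfl fun p _ => ?_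
      have h2 : T p.2 p.1 = T p.1 p.2 := congrFun (congrFun hTsymm p.1) p.2
      rw [h2, sq]
    have hBsum : (∑ p : Fin n × Fin n, B p.2 p.1 ^ 2) = (M⁻¹ * C).trace := by
      have hMinv : M⁻¹ = T⁻¹ * T⁻¹ := by rw [← hTT, Matrix.mul_inv_rev]
      have hBtB : Bᵀ * B = S * (T⁻¹ * T⁻¹ * S) := by
        rw [hBdef, Matrix.transpose_mul, Matrix.transpose_nonsing_inv, hTsymm, hSsymm]
        noncomm_ring
      have : (Bᵀ * B).trace = (M⁻¹ * C).trace := by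
        rw [hBtB, Matrix.trace_mul_comm, hMinv, ← hSsq]
        noncomm_ring
      rw [← this, trace_mul_eq_sum]
      refine Finset.sum_congr rfl fun p _ => ?_
      simp [Matrix.transpose_apply, sq]
    rw [hTsum, hBsum, ← hTB, ← h1] at hCS
    have hnonneg : 0 ≤ (M⁻¹ * C).trace := by
      rw [← hBsum]; positivity
    calc S.trace ^ 2 ≤ M.trace * (M⁻¹ * C).trace := hCS
      _ ≤ (M⁻¹ * C).trace := mul_le_of_le_one_left hnonneg hMt
  · rw [Matrix.trace_smul, smul_eq_mul, inv_mul_cancel₀ htrS.ne']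
  · have hinv : ((S.trace)⁻¹ • S)⁻¹ = S.trace • S⁻¹ := by
      apply Matrix.inv_eq_right_inv
      rw [Matrix.smul_mul, Matrix.mul_smul, mul_nonsing_inv S hSdet, smul_smul,
        inv_mul_cancel₀ htrS.ne', one_smul]
    rw [hinv, Matrix.smul_mul, Matrix.trace_smul, ← hSsq, ← Matrix.mul_assoc,
      nonsing_inv_mul S hSdet, Matrix.one_mul, smul_eq_mul, sq]
end

section
/- Let M ∈ ℝ^{n×n} be symmetric positive definite and C ∈ ℝ^{n×n} be symmetric positive semidefinite. Let λ₁(C) ≥ … ≥ λₙ(C) and λ₁(M) ≥ … ≥ λₙ(M) denote their eigenvalues in decreasing order. Then tr(M⁻¹ C) ≥ Σ_{i=1}^{n} λᵢ(C)/λᵢ(M). -/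
open Matrix BigOperators

/-- Minimizing a linear functional `d ↦ ∑ᵢⱼ aᵢ bⱼ dᵢⱼ` over doubly stochastic matrices:
if the value on every permutation matrix is at least `c`, then it is at least `c` on every
doubly stochastic matrix (by Birkhoff's theorem). -/
lemma aux_ds_min {n : ℕ} (a b : Fin n → ℝ) (c : ℝ)
    (h : ∀ σ : Equiv.Perm (Fin n), c ≤ ∑ i, a i * b (σ i))
    {d : Matrix (Fin n) (Fin n) ℝ} (hd : d ∈ doublyStochastic ℝ (Fin n)) :
    c ≤ ∑ i, ∑ j, a i * b j * d i j := by
  let L : Matrix (Fin n) (Fin n) ℝ →ₗ[ℝ] ℝ :=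
    { toFun := fun x => ∑ i, ∑ j, a i * b j * x i j
      map_add' := by intros; simp [mul_add, Finset.sum_add_distrib]
      map_smul' := by intros; simp [Finset.mul_sum, mul_left_comm] }
  have hconv : Convex ℝ {x : Matrix (Fin n) (Fin n) ℝ | c ≤ L x} :=
    convex_halfSpace_ge (LinearMap.isLinear L) c
  have hsub : (doublyStochastic ℝ (Fin n) : Set (Matrix (Fin n) (Fin n) ℝ)) ⊆
      {x | c ≤ L x} := by
    rw [doublyStochastic_eq_convexHull_permMatrix]
    refine convexHull_min ?_ hconv
    rintro x ⟨σ, rfl⟩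
    have : (L (σ.permMatrix ℝ)) = ∑ i, a i * b (σ i) := by
      simp only [L, LinearMap.coe_mk, AddHom.coe_mk, Equiv.Perm.permMatrix,
        PEquiv.toMatrix_apply, Equiv.toPEquiv_apply, Option.mem_def, Option.some.injEq,
        mul_ite, mul_one, mul_zero]
      refine Finset.sum_congr rfl fun i _ => ?_
      rw [Finset.sum_ite_eq Finset.univ (σ i) (fun j => a i * b j)]
      simp
    simpa [Set.mem_setOf_eq, this] using h σ
  exact hsub hd

/-- Trace identity: `tr((P D P*) (Q F Q*)) = ∑ᵢⱼ e'ᵢ fⱼ Wᵢⱼ²` with `W = P* Q`. -/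
lemma aux_trace_eq {n : ℕ} (P Q : Matrix (Fin n) (Fin n) ℝ) (e' f : Fin n → ℝ) :
    (P * diagonal e' * star P * (Q * diagonal f * star Q)).trace
      = ∑ i, ∑ j, e' i * f j * ((star P * Q) i j)^2 := by
  set W := star P * Q with hW
  have hWs : star W = star Q * P := by rw [hW, StarMul.star_mul, star_star]
  have h1 : P * diagonal e' * star P * (Q * diagonal f * star Q)
      = P * (diagonal e' * W * diagonal f * star Q) := by
    rw [hW]; simp only [Matrix.mul_assoc]
  rw [h1, trace_mul_comm]
  have h2 : diagonal e' * W * diagonal f * star Q * P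
      = diagonal e' * (W * diagonal f * star W) := by
    rw [hWs]; simp only [Matrix.mul_assoc]
  rw [h2]
  have h3 : ∀ (X : Matrix (Fin n) (Fin n) ℝ), (diagonal e' * X).trace = ∑ i, e' i * X i i := by
    intro X
    rw [Matrix.trace]
    exact Finset.sum_congr rfl fun i _ => by rw [diag_apply, diagonal_mul]
  rw [h3]
  refine Finset.sum_congr rfl fun i _ => ?_
  have h4 : (W * diagonal f * star W) i i = ∑ j, f j * (W i j)^2 := by
    rw [mul_apply]
    refine Finset.sum_congr rfl fun j _ => ?_
    rw [mul_diagonal, Matrix.star_apply, star_trivial]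
    ring
  rw [h4, Finset.mul_sum]
  exact Finset.sum_congr rfl fun j _ => by ring

/-- For `M` symmetric positive definite and `C` symmetric positive
semidefinite, with eigenvalues listed in decreasing order `μ₁ ≥ … ≥ μₙ` (of `M`)
and `λ₁ ≥ … ≥ λₙ` (of `C`), one has `tr(M⁻¹ C) ≥ Σᵢ λᵢ/μᵢ`. The decreasing
enumerations are specified as antitone permutations of Mathlib's eigenvalue
functions. -/
theorem stmt7 {n : ℕ}
    (M C : Matrix (Fin n) (Fin n) ℝ)
    (hM : M.PosDef) (hC : C.PosSemidef)
    (μ lam : Fin n → ℝ)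
    (hμanti : Antitone μ) (hlamanti : Antitone lam)
    (pμ : Equiv.Perm (Fin n)) (hμ : μ = hM.1.eigenvalues ∘ pμ)
    (plam : Equiv.Perm (Fin n)) (hlam : lam = hC.1.eigenvalues ∘ plam) :
    ∑ i, lam i / μ i ≤ (M⁻¹ * C).trace := by
  set e := hM.1.eigenvalues with he
  set f := hC.1.eigenvalues with hf
  set P : Matrix (Fin n) (Fin n) ℝ := (hM.1.eigenvectorUnitary : Matrix (Fin n) (Fin n) ℝ) with hP
  set Q : Matrix (Fin n) (Fin n) ℝ := (hC.1.eigenvectorUnitary : Matrix (Fin n) (Fin n) ℝ) with hQ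
  have hP1 : P * star P = 1 := mem_unitaryGroup_iff.mp (hM.1.eigenvectorUnitary).2
  have hP2 : star P * P = 1 := mem_unitaryGroup_iff'.mp (hM.1.eigenvectorUnitary).2
  have hQ1 : Q * star Q = 1 := mem_unitaryGroup_iff.mp (hC.1.eigenvectorUnitary).2
  have hQ2 : star Q * Q = 1 := mem_unitaryGroup_iff'.mp (hC.1.eigenvectorUnitary).2
  have hMspec : M = P * diagonal e * star P := by
    have := hM.1.spectral_theorem
    simpa using this
  have hCspec : C = Q * diagonal f * star Q := by
    have := hC.1.spectral_theorem
    simpa using this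
  have hepos : ∀ i, 0 < e i := fun i => hM.eigenvalues_pos i
  have hfnn : ∀ i, 0 ≤ f i := fun i => hC.eigenvalues_nonneg i
  have hμpos : ∀ i, 0 < μ i := fun i => by rw [hμ]; exact hepos (pμ i)
  have hMinv : M⁻¹ = P * diagonal (fun i => (e i)⁻¹) * star P := by
    apply inv_eq_right_inv
    rw [hMspec]
    calc P * diagonal e * star P * (P * diagonal (fun i => (e i)⁻¹) * star P)
        = P * (diagonal e * (star P * P) * diagonal (fun i => (e i)⁻¹)) * star P := by
          ring_nf
          noncomm_ring [mul_assoc]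
      _ = 1 := by
          rw [hP2, mul_one, diagonal_mul_diagonal]
          have : (fun i => e i * (e i)⁻¹) = fun _ => (1:ℝ) := by
            funext i; exact mul_inv_cancel₀ (hepos i).ne'
          rw [this, diagonal_one, mul_one, hP1]
  set W := star P * Q with hW
  have hWs : star W = star Q * P := by rw [hW, StarMul.star_mul, star_star]
  have hWr : W * star W = 1 := by
    rw [hW, hWs]
    calc star P * Q * (star Q * P) = star P * (Q * star Q) * P := by
          simp only [Matrix.mul_assoc]
      _ = 1 := by rw [hQ1, mul_one, hP2]
  have hWc : star W * W = 1 := by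
    rw [hW, hWs]
    calc star Q * P * (star P * Q) = star Q * (P * star P) * Q := by
          simp only [Matrix.mul_assoc]
      _ = 1 := by rw [hP1, mul_one, hQ2]
  -- the doubly stochastic matrix of squared entries of `W`
  set d : Matrix (Fin n) (Fin n) ℝ := Matrix.of (fun i j => (W i j)^2) with hd
  have hdmem : d ∈ doublyStochastic ℝ (Fin n) := by
    rw [mem_doublyStochastic_iff_sum]
    refine ⟨fun i j => sq_nonneg _, fun i => ?_, fun j => ?_⟩
    · have := congrArg (fun A => A i i) hWr
      simp only [mul_apply, Matrix.star_apply, star_trivial, one_apply_eq] at this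
      rw [← this]
      exact Finset.sum_congr rfl fun j _ => by simp [hd, sq]
    · have := congrArg (fun A => A j j) hWc
      simp only [mul_apply, Matrix.star_apply, star_trivial, one_apply_eq] at this
      rw [← this]
      exact Finset.sum_congr rfl fun i _ => by simp [hd, sq]
  -- the trace as a bilinear sum over `d`
  have htr : (M⁻¹ * C).trace = ∑ i, ∑ j, (e i)⁻¹ * f j * d i j := by
    rw [hMinv, hCspec, aux_trace_eq]
    rfl
  rw [htr]
  -- the bound on permutation matrices, via the rearrangement inequality
  refine aux_ds_min _ _ _ (fun σ => ?_) hdmem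
  have hre : ∑ i, (e i)⁻¹ * f (σ i)
      = ∑ k, (μ k)⁻¹ * lam (((pμ.trans σ).trans plam.symm) k) := by
    rw [← Equiv.sum_comp pμ (fun i => (e i)⁻¹ * f (σ i))]
    refine Finset.sum_congr rfl fun k _ => ?_
    have h1 : (μ k)⁻¹ = (e (pμ k))⁻¹ := by rw [hμ]; rfl
    have h2 : lam (plam.symm (σ (pμ k))) = f (σ (pμ k)) := by
      rw [hlam]; simp
    rw [h1, Equiv.trans_apply, Equiv.trans_apply, h2]
  rw [hre]
  have hant : Antivary (fun k => (μ k)⁻¹) lam := by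
    intro i j hij
    have hji : j < i := by
      by_contra hc
      push_neg at hc
      exact absurd (hlamanti hc) (not_le.mpr hij)
    exact inv_anti₀ (hμpos i) (hμanti hji.le)
  have := hant.sum_smul_le_sum_smul_comp_perm (σ := (pμ.trans σ).trans plam.symm)
  simp only [smul_eq_mul] at this
  calc ∑ i, lam i / μ i = ∑ i, (μ i)⁻¹ * lam i := by
        refine Finset.sum_congr rfl fun i _ => ?_
        rw [div_eq_mul_inv, mul_comm]
    _ ≤ _ := this
end

section
/- Let k < n, let Q ∈ ℝ^{n×k} satisfy QᵀQ = I_k, let B ∈ ℝ^{k×k} be symmetric positive definite, let a > 0, and let C ∈ ℝ^{n×n} be symmetric. Set A = Q B Qᵀ + a(I − QQᵀ) and C̃ = Qᵀ C Q. Then tr(A) = tr(B) + a(n−k) and tr(A⁻¹ C) = tr(B⁻¹ C̃) + a⁻¹ (tr(C) − tr(C̃)). -/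
open Matrix BigOperators

/-- For the sketched conditioner `A = Q B Qᵀ + a (I − Q Qᵀ)`
(with `QᵀQ = I`, `B` symmetric positive definite, `a > 0`) and any symmetric
`C ∈ ℝ^{n×n}`, writing `C̃ = Qᵀ C Q`, one has `tr(A) = tr(B) + a(n−k)` and
`tr(A⁻¹ C) = tr(B⁻¹ C̃) + a⁻¹ (tr(C) − tr(C̃))`. -/
theorem stmt9 {n k : ℕ} (hk : k < n)
    (Q : Matrix (Fin n) (Fin k) ℝ) (hQ : Qᵀ * Q = 1)
    (B : Matrix (Fin k) (Fin k) ℝ) (hB : B.PosDef)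
    (a : ℝ) (ha : 0 < a)
    (C : Matrix (Fin n) (Fin n) ℝ) (hCsymm : C.IsSymm)
    (A : Matrix (Fin n) (Fin n) ℝ)
    (hA : A = Q * B * Qᵀ + a • (1 - Q * Qᵀ))
    (Ct : Matrix (Fin k) (Fin k) ℝ) (hCt : Ct = Qᵀ * C * Q) :
    A.trace = B.trace + a * ((n : ℝ) - (k : ℝ))
      ∧ (A⁻¹ * C).trace = (B⁻¹ * Ct).trace + a⁻¹ * (C.trace - Ct.trace) := by
  have hQQ : (Q * Qᵀ).trace = (k : ℝ) := by
    rw [trace_mul_comm, hQ, trace_one]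
    simp
  have hBdet : IsUnit B.det := isUnit_iff_ne_zero.mpr (ne_of_gt hB.det_pos)
  have hBinv : B * B⁻¹ = 1 := Matrix.mul_nonsing_inv B hBdet
  -- inverse formula
  have hAinv : A⁻¹ = Q * B⁻¹ * Qᵀ + a⁻¹ • (1 - Q * Qᵀ) := by
    apply Matrix.inv_eq_right_inv
    rw [hA]
    have e1 : Qᵀ * (1 - Q * Qᵀ) = 0 := by
      rw [Matrix.mul_sub, Matrix.mul_one, ← Matrix.mul_assoc, hQ, Matrix.one_mul, sub_self]
    have e2 : (1 - Q * Qᵀ) * Q = 0 := by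
      rw [Matrix.sub_mul, Matrix.one_mul, Matrix.mul_assoc, hQ, Matrix.mul_one, sub_self]
    have e3 : (1 - Q * Qᵀ) * (1 - Q * Qᵀ) = 1 - Q * Qᵀ := by
      rw [Matrix.mul_sub, Matrix.mul_one, ← Matrix.mul_assoc, e2, Matrix.zero_mul, sub_zero]
    calc (Q * B * Qᵀ + a • (1 - Q * Qᵀ)) * (Q * B⁻¹ * Qᵀ + a⁻¹ • (1 - Q * Qᵀ))
        = Q * B * (Qᵀ * Q) * B⁻¹ * Qᵀ + a⁻¹ • (Q * B * (Qᵀ * (1 - Q * Qᵀ)))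
          + a • ((1 - Q * Qᵀ) * Q * B⁻¹ * Qᵀ)
          + (a * a⁻¹) • ((1 - Q * Qᵀ) * (1 - Q * Qᵀ)) := by
          rw [Matrix.add_mul, Matrix.mul_add, Matrix.mul_add, Matrix.smul_mul,
            Matrix.mul_smul, Matrix.mul_smul, Matrix.smul_mul, smul_smul]
          simp only [Matrix.mul_assoc, mul_comm a⁻¹ a]
          simp only [add_assoc]
      _ = 1 := by
          rw [e1, e2, e3, hQ, Matrix.mul_one, Matrix.mul_assoc Q B B⁻¹, hBinv,
            Matrix.mul_one, mul_inv_cancel₀ (ne_of_gt ha), one_smul,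
            Matrix.mul_zero, smul_zero, Matrix.zero_mul, Matrix.zero_mul, smul_zero]
          abel
  constructor
  · rw [hA, trace_add, trace_smul, trace_sub, trace_one, trace_mul_comm,
      ← Matrix.mul_assoc, hQ, Matrix.one_mul, hQQ]
    simp [smul_eq_mul]
  · rw [hAinv, Matrix.add_mul, trace_add, Matrix.smul_mul, trace_smul,
      Matrix.sub_mul, Matrix.one_mul, trace_sub, smul_eq_mul]
    congr 1
    · rw [hCt, Matrix.mul_assoc (Q * B⁻¹) Qᵀ C, trace_mul_comm (Q * B⁻¹) (Qᵀ * C),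
        ← Matrix.mul_assoc, trace_mul_comm]
    · rw [hCt, Matrix.mul_assoc, trace_mul_comm Q (Qᵀ * C), Matrix.mul_assoc]
end

section
/- Let k < n, let Q ∈ ℝ^{n×k} satisfy QᵀQ = I_k, let B ∈ ℝ^{k×k} be symmetric positive definite, and let C ∈ ℝ^{n×n} be symmetric positive semidefinite with tr(C) > tr(C̃), where C̃ = Qᵀ C Q. Set a = √((tr(C) − tr(C̃))/(n−k)) and A = Q B Qᵀ + a(I − QQᵀ). Then tr(A) + tr(A⁻¹ C) = tr(B) + tr(B⁻¹ C̃) + 2√((n−k)(tr(C) − tr(C̃))). -/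
open Matrix BigOperators

/-- Theorem 2 of the paper, key identity. With `QᵀQ = I`,
`B` symmetric positive definite, `C` symmetric PSD, `C̃ = Qᵀ C Q`,
`tr(C) > tr(C̃)`, and `a = √((tr(C) − tr(C̃))/(n−k))`, the sketched conditioner
`A = Q B Qᵀ + a (I − Q Qᵀ)` satisfies
`tr(A) + tr(A⁻¹ C) = tr(B) + tr(B⁻¹ C̃) + 2√((n−k)(tr(C) − tr(C̃)))`. -/
theorem stmt10 {n k : ℕ} (hk : k < n)
    (Q : Matrix (Fin n) (Fin k) ℝ) (hQ : Qᵀ * Q = 1)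
    (B : Matrix (Fin k) (Fin k) ℝ) (hB : B.PosDef)
    (C : Matrix (Fin n) (Fin n) ℝ) (hC : C.PosSemidef)
    (Ct : Matrix (Fin k) (Fin k) ℝ) (hCt : Ct = Qᵀ * C * Q)
    (htr : Ct.trace < C.trace)
    (a : ℝ) (ha : a = Real.sqrt ((C.trace - Ct.trace) / ((n : ℝ) - (k : ℝ))))
    (A : Matrix (Fin n) (Fin n) ℝ)
    (hA : A = Q * B * Qᵀ + a • (1 - Q * Qᵀ)) :
    A.trace + (A⁻¹ * C).trace
      = B.trace + (B⁻¹ * Ct).trace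
        + 2 * Real.sqrt (((n : ℝ) - (k : ℝ)) * (C.trace - Ct.trace)) := by
  have hm : (0:ℝ) < (n:ℝ) - (k:ℝ) := by
    have : (k:ℝ) < n := by exact_mod_cast hk
    linarith
  have hd : (0:ℝ) < C.trace - Ct.trace := sub_pos.mpr htr
  have hapos : 0 < a := by
    rw [ha]; exact Real.sqrt_pos.mpr (div_pos hd hm)
  have hane : a ≠ 0 := hapos.ne'
  have hQ0 : (1 - Q * Qᵀ) * Q = 0 := by
    rw [Matrix.sub_mul, Matrix.one_mul, Matrix.mul_assoc, hQ, Matrix.mul_one, sub_self]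
  have hQ0' : Qᵀ * (1 - Q * Qᵀ) = 0 := by
    rw [Matrix.mul_sub, Matrix.mul_one, ← Matrix.mul_assoc, hQ, Matrix.one_mul, sub_self]
  have hBdet : IsUnit B.det := isUnit_iff_ne_zero.mpr hB.det_pos.ne'
  have hBB : B * B⁻¹ = 1 := Matrix.mul_nonsing_inv B hBdet
  have hcancel : ∀ (X : Matrix (Fin k) (Fin n) ℝ), Qᵀ * (Q * X) = X := by
    intro X; rw [← Matrix.mul_assoc, hQ, Matrix.one_mul]
  have hcancelB : ∀ (X : Matrix (Fin k) (Fin n) ℝ), B * (B⁻¹ * X) = X := by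
    intro X; rw [← Matrix.mul_assoc, hBB, Matrix.one_mul]
  have h1 : (Q * B * Qᵀ) * (Q * B⁻¹ * Qᵀ) = Q * Qᵀ := by
    simp only [Matrix.mul_assoc, hcancel, hcancelB]
  have h2 : (Q * B * Qᵀ) * (1 - Q * Qᵀ) = 0 := by
    rw [Matrix.mul_assoc, hQ0', Matrix.mul_zero]
  have h3 : (1 - Q * Qᵀ) * (Q * B⁻¹ * Qᵀ) = 0 := by
    rw [← Matrix.mul_assoc, ← Matrix.mul_assoc, hQ0, Matrix.zero_mul, Matrix.zero_mul]
  have h4 : (1 - Q * Qᵀ) * (1 - Q * Qᵀ) = 1 - Q * Qᵀ := by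
    rw [mul_sub, mul_one, ← Matrix.mul_assoc, hQ0, Matrix.zero_mul, sub_zero]
  have hAinv : A⁻¹ = Q * B⁻¹ * Qᵀ + a⁻¹ • (1 - Q * Qᵀ) := by
    apply Matrix.inv_eq_right_inv
    rw [hA, add_mul, mul_add, mul_add, smul_mul_assoc, smul_mul_assoc,
      mul_smul_comm, mul_smul_comm, h1, h2, h3, h4, smul_zero, smul_zero,
      add_zero, zero_add, smul_smul, mul_inv_cancel₀ hane, one_smul,
      add_sub_cancel]
  have htrP : (Q * Qᵀ).trace = (k : ℝ) := by
    rw [Matrix.trace_mul_comm, hQ, Matrix.trace_one]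
    simp
  have htrA : A.trace = B.trace + a * ((n:ℝ) - (k:ℝ)) := by
    rw [hA, Matrix.trace_add, Matrix.trace_smul, smul_eq_mul]
    congr 1
    · rw [Matrix.trace_mul_cycle, hQ, Matrix.one_mul]
    · rw [Matrix.trace_sub, Matrix.trace_one, htrP]
      simp
  have htrQC : (Q * Qᵀ * C).trace = Ct.trace := by
    rw [Matrix.mul_assoc, Matrix.trace_mul_comm, hCt, Matrix.mul_assoc]
  have htrAC : (A⁻¹ * C).trace = (B⁻¹ * Ct).trace + a⁻¹ * (C.trace - Ct.trace) := by
    rw [hAinv, add_mul, smul_mul_assoc, Matrix.trace_add, Matrix.trace_smul,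
      smul_eq_mul]
    congr 1
    · have he : (Q * B⁻¹ * Qᵀ) * C = Q * (B⁻¹ * (Qᵀ * C)) := by
        simp only [Matrix.mul_assoc]
      rw [he, Matrix.trace_mul_comm, hCt]
      congr 1
      simp only [Matrix.mul_assoc]
    · rw [Matrix.sub_mul, Matrix.one_mul, Matrix.trace_sub, htrQC]
  have ha2 : a * a = (C.trace - Ct.trace) / ((n:ℝ) - (k:ℝ)) := by
    rw [ha]; exact Real.mul_self_sqrt (div_pos hd hm).le
  have ham : (a * ((n:ℝ) - (k:ℝ))) * (a * ((n:ℝ) - (k:ℝ)))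
      = ((n:ℝ) - (k:ℝ)) * (C.trace - Ct.trace) := by
    rw [show (a * ((n:ℝ) - (k:ℝ))) * (a * ((n:ℝ) - (k:ℝ)))
        = a * a * ((n:ℝ) - (k:ℝ)) * ((n:ℝ) - (k:ℝ)) by ring, ha2,
      div_mul_cancel₀ _ hm.ne']
    ring
  have h5 : a * ((n:ℝ) - (k:ℝ)) = Real.sqrt (((n:ℝ) - (k:ℝ)) * (C.trace - Ct.trace)) := by
    rw [← ham, Real.sqrt_mul_self (mul_pos hapos hm).le]
  have h6 : a⁻¹ * (C.trace - Ct.trace) = a * ((n:ℝ) - (k:ℝ)) := by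
    have hx : C.trace - Ct.trace = a * (a * ((n:ℝ) - (k:ℝ))) := by
      rw [← mul_assoc, ha2, div_mul_cancel₀ _ hm.ne']
    rw [hx, inv_mul_cancel_left₀ hane]
  rw [htrA, htrAC, h6, h5]
  ring
end

section
/- In the setting of conditioned SGD, let Q ∈ ℝ^{n×k} (k < n) have orthonormal columns, let B ∈ ℝ^{k×k} be symmetric positive definite, let C̃ = Qᵀ C Q where C = (1/m) Σ x_i x_iᵀ, assume tr(C) > tr(C̃), and run the algorithm with conditioner A = Q B Qᵀ + a(I − QQᵀ) where a = √((tr(C) − tr(C̃))/(n−k)), and with learning rate η = σ/(ρ√T) where σ ≥ ‖W*‖_spectral. Then E[L(W̄) − L(W*)] ≤ (σρ/√T) · ( tr(B) + tr(B⁻¹ C̃) + 2√((n−k)(tr(C) − tr(C̃))) ). -/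
open Matrix BigOperators

section Aux

variable {ι κ : Type*} [Fintype ι] [Fintype κ] [DecidableEq ι] [DecidableEq κ]

lemma aux_vecMulVec_mulVec (u : ι → ℝ) (v w : κ → ℝ) :
    vecMulVec u v *ᵥ w = (v ⬝ᵥ w) • u := by
  ext i
  simp only [vecMulVec_apply, mulVec, dotProduct, Pi.smul_apply, smul_eq_mul, Finset.sum_mul,
    Finset.mul_sum]
  exact Finset.sum_congr rfl fun j _ => by ring

lemma aux_trace_mul_vecMulVec (M : Matrix ι κ ℝ) (u : κ → ℝ) (v : ι → ℝ) :
    (M * vecMulVec u v).trace = v ⬝ᵥ (M *ᵥ u) := by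
  simp only [Matrix.trace, Matrix.diag, mul_apply, vecMulVec_apply, dotProduct, mulVec,
    Finset.mul_sum]
  exact Finset.sum_congr rfl fun i _ => Finset.sum_congr rfl fun j _ => by ring

lemma aux_vecMulVec_mul (u : ι → ℝ) (v : κ → ℝ) (A : Matrix κ κ ℝ) :
    vecMulVec u v * A = vecMulVec u (v ᵥ* A) := by
  ext i j
  simp only [mul_apply, vecMulVec_apply, vecMul, dotProduct, Finset.mul_sum]
  exact Finset.sum_congr rfl fun l _ => by ring

lemma aux_transpose_vecMulVec_s11 (u : ι → ℝ) (v : κ → ℝ) :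
    (vecMulVec u v)ᵀ = vecMulVec v u := by
  ext i j; simp [vecMulVec_apply, mul_comm]

lemma aux_transpose_eq_of_isHermitian {M : Matrix ι ι ℝ} (h : M.IsHermitian) : Mᵀ = M := by
  ext i j
  have := congrFun (congrFun h i) j
  simpa [Matrix.conjTranspose_apply] using this

lemma aux_trace_nonneg_s11 {M : Matrix ι ι ℝ} (h : M.PosSemidef) : 0 ≤ M.trace := by
  have hd : ∀ i, 0 ≤ M i i := by
    intro i
    have := h.diag_nonneg (i := i)
    simpa [dotProduct, mulVec, Pi.single_apply, Finset.mul_sum] using this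
  exact Finset.sum_nonneg fun i _ => hd i

open scoped MatrixOrder in
lemma aux_sqrt_exists {M : Matrix ι ι ℝ} (h : M.PosSemidef) :
    ∃ R : Matrix ι ι ℝ, R * R = M ∧ R.IsHermitian :=
  ⟨CFC.sqrt M, CFC.sqrt_mul_sqrt_self M h.nonneg, (CFC.sqrt_nonneg M).posSemidef.1⟩

lemma aux_conjTranspose_eq_transpose (M : Matrix ι κ ℝ) : Mᴴ = Mᵀ := by
  ext i j; simp

end Aux

set_option maxHeartbeats 1600000 in
/-- Theorem 2 of the paper. Conditioned SGD with the sketched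
conditioner `A = Q B Qᵀ + a (I − Q Qᵀ)`, where `QᵀQ = I`, `B` is symmetric
positive definite, `C̃ = Qᵀ C Q`, `tr(C) > tr(C̃)`,
`a = √((tr(C) − tr(C̃))/(n−k))`, and learning rate `η = σ/(ρ√T)` with
`σ ≥ ‖W*‖_spectral`, satisfies
`E[L(W̄) − L(W*)] ≤ (σρ/√T) (tr(B) + tr(B⁻¹ C̃) + 2√((n−k)(tr(C) − tr(C̃))))`. -/
theorem stmt11 {n p m k : ℕ} (hm : 0 < m) (hk : k < n)
    (x : Fin m → Fin n → ℝ) (ρ : ℝ) (hρ : 0 < ρ)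
    (ℓ : Fin m → (Fin p → ℝ) → ℝ)
    (hconv : ∀ i, ConvexOn ℝ Set.univ (ℓ i))
    (hlip : ∀ i, ∀ u v : Fin p → ℝ,
      |ℓ i u - ℓ i v| ≤ ρ * Real.sqrt (∑ j, (u j - v j) ^ 2))
    (L : Matrix (Fin p) (Fin n) ℝ → ℝ)
    (hL : ∀ W, L W = (1 / (m : ℝ)) * ∑ i, ℓ i (W *ᵥ x i))
    (Wstar : Matrix (Fin p) (Fin n) ℝ)
    (hWstar : ∀ W, L Wstar ≤ L W)
    (σ : ℝ)
    (hσ : ∀ v : Fin n → ℝ,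
      Real.sqrt (∑ j, ((Wstar *ᵥ v) j) ^ 2) ≤ σ * Real.sqrt (∑ i, (v i) ^ 2))
    (C : Matrix (Fin n) (Fin n) ℝ)
    (hC : C = (1 / (m : ℝ)) • ∑ i, Matrix.vecMulVec (x i) (x i))
    (Q : Matrix (Fin n) (Fin k) ℝ) (hQ : Qᵀ * Q = 1)
    (B : Matrix (Fin k) (Fin k) ℝ) (hB : B.PosDef)
    (Ct : Matrix (Fin k) (Fin k) ℝ) (hCt : Ct = Qᵀ * C * Q)
    (htr : Ct.trace < C.trace)
    (a : ℝ) (ha : a = Real.sqrt ((C.trace - Ct.trace) / ((n : ℝ) - (k : ℝ))))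
    (A : Matrix (Fin n) (Fin n) ℝ)
    (hA : A = Q * B * Qᵀ + a • (1 - Q * Qᵀ))
    (T : ℕ) (hT : 0 < T)
    (η : ℝ) (hη : η = σ / (ρ * Real.sqrt T))
    (g : Matrix (Fin p) (Fin n) ℝ → Fin m → (Fin p → ℝ))
    (hg : ∀ W i, ∀ u : Fin p → ℝ,
      ℓ i (W *ᵥ x i) + ∑ j, g W i j * (u j - (W *ᵥ x i) j) ≤ ℓ i u)
    (W : (Fin T → Fin m) → ℕ → Matrix (Fin p) (Fin n) ℝ)
    (hW0 : ∀ ω, W ω 0 = 0)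
    (hWt : ∀ ω (t : Fin T),
      W ω ((t : ℕ) + 1)
        = W ω (t : ℕ)
          - η • Matrix.vecMulVec (g (W ω (t : ℕ)) (ω t)) (A⁻¹ *ᵥ x (ω t))) :
    (∑ ω : Fin T → Fin m,
        (L ((T : ℝ)⁻¹ • ∑ t : Fin T, W ω (t : ℕ)) - L Wstar)) / (m : ℝ) ^ T
      ≤ (σ * ρ / Real.sqrt T)
          * (B.trace + (B⁻¹ * Ct).trace
              + 2 * Real.sqrt (((n : ℝ) - (k : ℝ)) * (C.trace - Ct.trace))) := by
  classical
  -- basic positivity facts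
  have hn0 : (0:ℕ) < n := lt_of_le_of_lt (Nat.zero_le k) hk
  have hnk : (0:ℝ) < (n:ℝ) - (k:ℝ) := by
    have : (k:ℝ) < (n:ℝ) := by exact_mod_cast hk
    linarith
  have hd : (0:ℝ) < C.trace - Ct.trace := sub_pos.2 htr
  have hapos : 0 < a := by
    rw [ha]; exact Real.sqrt_pos.2 (div_pos hd hnk)
  have hmR : (0:ℝ) < (m:ℝ) := by exact_mod_cast hm
  have hTR : (0:ℝ) < (T:ℝ) := by exact_mod_cast hT
  set τ := Real.sqrt T with hτdef
  have hτ : 0 < τ := Real.sqrt_pos.2 hTR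
  have hττ : τ * τ = (T:ℝ) := Real.mul_self_sqrt hTR.le
  -- symmetry facts
  have hBsym : Bᵀ = B := aux_transpose_eq_of_isHermitian hB.1
  set P : Matrix (Fin n) (Fin n) ℝ := 1 - Q * Qᵀ with hP
  have hPsym : Pᵀ = P := by
    rw [hP, transpose_sub, transpose_one, transpose_mul, transpose_transpose]
  have hPQ : P * Q = 0 := by
    rw [hP, Matrix.sub_mul, Matrix.one_mul, Matrix.mul_assoc, hQ, Matrix.mul_one, sub_self]
  have hQP : Qᵀ * P = 0 := by
    rw [hP, Matrix.mul_sub, Matrix.mul_one, ← Matrix.mul_assoc, hQ, Matrix.one_mul, sub_self]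
  have hPP : P * P = P := by
    nth_rewrite 2 [hP]
    rw [Matrix.mul_sub, Matrix.mul_one, ← Matrix.mul_assoc, hPQ, Matrix.zero_mul, sub_zero]
  have hAsym : Aᵀ = A := by
    rw [hA, transpose_add, transpose_smul, transpose_mul, transpose_mul, transpose_transpose,
      hBsym, Matrix.mul_assoc, hPsym]
  -- inverse of A
  have hBdet : IsUnit B.det := hB.det_pos.ne'.isUnit
  have hBBinv : B * B⁻¹ = 1 := Matrix.mul_nonsing_inv _ hBdet
  have hAM : A * (Q * B⁻¹ * Qᵀ + a⁻¹ • P) = 1 := by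
    rw [hA]
    rw [Matrix.add_mul, Matrix.mul_add, Matrix.mul_add]
    have e1 : Q * B * Qᵀ * (Q * B⁻¹ * Qᵀ) = Q * Qᵀ := by
      calc Q * B * Qᵀ * (Q * B⁻¹ * Qᵀ) = Q * (B * ((Qᵀ * Q) * B⁻¹)) * Qᵀ := by
            simp only [Matrix.mul_assoc]
        _ = Q * Qᵀ := by rw [hQ, Matrix.one_mul, hBBinv, Matrix.mul_one]
    have e2 : Q * B * Qᵀ * (a⁻¹ • P) = 0 := by
      rw [Matrix.mul_smul]
      have : Q * B * Qᵀ * P = Q * B * (Qᵀ * P) := by simp only [Matrix.mul_assoc]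
      rw [this, hQP, Matrix.mul_zero, smul_zero]
    have e3 : (a • P) * (Q * B⁻¹ * Qᵀ) = 0 := by
      rw [Matrix.smul_mul]
      have : P * (Q * B⁻¹ * Qᵀ) = (P * Q) * (B⁻¹ * Qᵀ) := by simp only [Matrix.mul_assoc]
      rw [this, hPQ, Matrix.zero_mul, smul_zero]
    have e4 : (a • P) * (a⁻¹ • P) = P := by
      rw [Matrix.smul_mul, Matrix.mul_smul, hPP, smul_smul, mul_inv_cancel₀ hapos.ne',
        one_smul]
    rw [e1, e2, e3, e4, add_zero, zero_add, hP]
    abel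
  have hAinv : A⁻¹ = Q * B⁻¹ * Qᵀ + a⁻¹ • P := Matrix.inv_eq_right_inv hAM
  have hAAinv : A * A⁻¹ = 1 := by rw [hAinv]; exact hAM
  -- positive definiteness of A
  have hdotself : ∀ {q : ℕ} (v : Fin q → ℝ), 0 ≤ v ⬝ᵥ v := by
    intro q v
    exact Finset.sum_nonneg fun i _ => mul_self_nonneg _
  have hApos : A.PosDef := by
    refine Matrix.PosDef.of_dotProduct_mulVec_pos ?_ ?_
    · show Aᴴ = A
      rw [aux_conjTranspose_eq_transpose, hAsym]
    · intro v hv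
      rw [star_trivial]
      have hexp : A *ᵥ v = Q *ᵥ (B *ᵥ (Qᵀ *ᵥ v)) + a • (P *ᵥ v) := by
        rw [hA, Matrix.add_mulVec, Matrix.smul_mulVec, Matrix.mulVec_mulVec,
          Matrix.mulVec_mulVec]
      rw [hexp, dotProduct_add]
      have hterm1 : v ⬝ᵥ (Q *ᵥ (B *ᵥ (Qᵀ *ᵥ v))) = (Qᵀ *ᵥ v) ⬝ᵥ (B *ᵥ (Qᵀ *ᵥ v)) := by
        rw [dotProduct_mulVec v Q, ← Matrix.mulVec_transpose]
      have hterm2 : v ⬝ᵥ (P *ᵥ v) = (P *ᵥ v) ⬝ᵥ (P *ᵥ v) := by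
        nth_rewrite 1 [show P = P * P from hPP.symm]
        rw [← Matrix.mulVec_mulVec, dotProduct_mulVec v P, ← Matrix.mulVec_transpose, hPsym]
      rw [hterm1, dotProduct_smul, hterm2, smul_eq_mul]
      by_cases hQv : Qᵀ *ᵥ v = 0
      · have hPv : P *ᵥ v = v := by
          rw [hP, Matrix.sub_mulVec, Matrix.one_mulVec, ← Matrix.mulVec_mulVec, hQv,
            Matrix.mulVec_zero, sub_zero]
        rw [hQv, hPv, Matrix.mulVec_zero, dotProduct_zero]
        have hvv : 0 < v ⬝ᵥ v := by
          rcases Function.ne_iff.1 hv with ⟨i, hi⟩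
          exact Finset.sum_pos' (fun j _ => mul_self_nonneg _)
            ⟨i, Finset.mem_univ i, mul_self_pos.2 hi⟩
        have := mul_pos hapos hvv
        linarith
      · have h1 : 0 < (Qᵀ *ᵥ v) ⬝ᵥ (B *ᵥ (Qᵀ *ᵥ v)) := by
          have := hB.dotProduct_mulVec_pos hQv
          rwa [star_trivial] at this
        have h2 : 0 ≤ (P *ᵥ v) ⬝ᵥ (P *ᵥ v) := hdotself _
        have := mul_nonneg hapos.le h2
        linarith
  have hAinvpos : A⁻¹.PosDef := hApos.inv
  have hApsd : A.PosSemidef := hApos.posSemidef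
  -- positive semidefiniteness of C and Ct
  have hCpsd : C.PosSemidef := by
    refine Matrix.PosSemidef.of_dotProduct_mulVec_nonneg ?_ ?_
    · show Cᴴ = C
      rw [aux_conjTranspose_eq_transpose, hC]
      ext i j
      simp only [transpose_apply, Matrix.smul_apply, Matrix.sum_apply, vecMulVec_apply,
        smul_eq_mul]
      rw [Finset.mul_sum, Finset.mul_sum]
      exact Finset.sum_congr rfl fun l _ => by ring
    · intro v
      rw [star_trivial, hC, Matrix.smul_mulVec, dotProduct_smul]
      have hmv : (∑ i, vecMulVec (x i) (x i)) *ᵥ v = ∑ i, ((x i ⬝ᵥ v) • x i) := by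
        have : (∑ i, vecMulVec (x i) (x i)) *ᵥ v = ∑ i, (vecMulVec (x i) (x i) *ᵥ v) := by
          ext j
          simp only [mulVec, dotProduct, Matrix.sum_apply, Finset.sum_apply, Finset.sum_mul]
          exact Finset.sum_comm
        rw [this]
        exact Finset.sum_congr rfl fun i _ => aux_vecMulVec_mulVec _ _ _
      have hds : v ⬝ᵥ (∑ i, ((x i ⬝ᵥ v) • x i)) = ∑ i, v ⬝ᵥ ((x i ⬝ᵥ v) • x i) := by
        simp only [dotProduct, Finset.sum_apply, Finset.mul_sum]
        exact Finset.sum_comm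
      rw [hmv, hds]
      have : ∀ i : Fin m, 0 ≤ v ⬝ᵥ ((x i ⬝ᵥ v) • x i) := by
        intro i
        rw [dotProduct_smul, smul_eq_mul, dotProduct_comm]
        exact mul_self_nonneg _
      have hs : 0 ≤ ∑ i : Fin m, v ⬝ᵥ ((x i ⬝ᵥ v) • x i) :=
        Finset.sum_nonneg fun i _ => this i
      have hcoef : (0:ℝ) ≤ 1 / (m:ℝ) := by positivity
      exact smul_nonneg hcoef hs
  have hCtpsd : Ct.PosSemidef := by
    have := hCpsd.mul_mul_conjTranspose_same Qᵀ
    rw [aux_conjTranspose_eq_transpose, transpose_transpose] at this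
    rwa [hCt]
  -- trace identities
  have htrQBQ : ∀ (M : Matrix (Fin k) (Fin k) ℝ), (Q * M * Qᵀ).trace = M.trace := by
    intro M
    rw [Matrix.trace_mul_cycle, hQ, Matrix.one_mul]
  have htrP : P.trace = (n:ℝ) - (k:ℝ) := by
    rw [hP, trace_sub, trace_one, Matrix.trace_mul_comm, hQ, trace_one]
    simp
  have htrA : A.trace = B.trace + a * ((n:ℝ) - (k:ℝ)) := by
    rw [hA, trace_add, trace_smul, htrQBQ, htrP, smul_eq_mul]
  have htrPC : (P * C).trace = C.trace - Ct.trace := by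
    rw [hP, Matrix.sub_mul, trace_sub, Matrix.one_mul, hCt]
    congr 1
    exact (Matrix.trace_mul_cycle Qᵀ C Q).symm
  have htrAC : (A⁻¹ * C).trace = (B⁻¹ * Ct).trace + a⁻¹ * (C.trace - Ct.trace) := by
    rw [hAinv, Matrix.add_mul, trace_add, Matrix.smul_mul, trace_smul, htrPC, smul_eq_mul]
    congr 1
    rw [hCt]
    rw [show Q * B⁻¹ * Qᵀ * C = Q * (B⁻¹ * Qᵀ * C) by simp only [Matrix.mul_assoc]]
    rw [Matrix.trace_mul_comm]
    rw [show B⁻¹ * Qᵀ * C * Q = B⁻¹ * (Qᵀ * C * Q) by simp only [Matrix.mul_assoc]]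
  -- scalar algebra for a and r
  set r := Real.sqrt (((n:ℝ) - (k:ℝ)) * (C.trace - Ct.trace)) with hrdef
  have hr : 0 ≤ r := Real.sqrt_nonneg _
  have ha2 : a ^ 2 = (C.trace - Ct.trace) / ((n:ℝ) - (k:ℝ)) := by
    rw [ha]; exact Real.sq_sqrt (by positivity)
  have hank : a * ((n:ℝ) - (k:ℝ)) = r := by
    have h1 : a * ((n:ℝ) - (k:ℝ)) = Real.sqrt ((a * ((n:ℝ) - (k:ℝ))) ^ 2) :=
      (Real.sqrt_sq (by positivity)).symm
    rw [h1, hrdef]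
    congr 1
    rw [mul_pow, ha2]
    field_simp
  have hainvd : a⁻¹ * (C.trace - Ct.trace) = r := by
    have h1 : a⁻¹ * (C.trace - Ct.trace) = Real.sqrt ((a⁻¹ * (C.trace - Ct.trace)) ^ 2) :=
      (Real.sqrt_sq (by positivity)).symm
    rw [h1, hrdef]
    congr 1
    rw [mul_pow, inv_pow, ha2]
    field_simp
  -- nonnegativity of σ
  have hσ0 : 0 ≤ σ := by
    have h1 := hσ (fun _ => 1)
    have h2 : (0:ℝ) < Real.sqrt (∑ i : Fin n, ((1:ℝ)) ^ 2) := by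
      rw [show (∑ i : Fin n, ((1:ℝ)) ^ 2) = (n:ℝ) by simp]
      exact Real.sqrt_pos.2 (by exact_mod_cast hn0)
    by_contra hcon
    push_neg at hcon
    have h3 : σ * Real.sqrt (∑ i : Fin n, ((1:ℝ)) ^ 2) < 0 := mul_neg_of_neg_of_pos hcon h2
    have h4 := Real.sqrt_nonneg (∑ j, ((Wstar *ᵥ fun _ => (1:ℝ)) j) ^ 2)
    linarith
  -- nonnegativity of the trace terms
  have htrB : 0 ≤ B.trace := aux_trace_nonneg_s11 hB.posSemidef
  have htrBCt : 0 ≤ (B⁻¹ * Ct).trace := by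
    have hBinvpsd : B⁻¹.PosSemidef := hB.inv.posSemidef
    obtain ⟨R0, hRR, hRh⟩ := aux_sqrt_exists hBinvpsd
    have hRsym : R0ᵀ = R0 :=
      aux_transpose_eq_of_isHermitian hRh
    have heq : (B⁻¹ * Ct).trace = (R0 * Ct * R0ᴴ).trace := by
      rw [aux_conjTranspose_eq_transpose, hRsym, Matrix.trace_mul_cycle, hRR]
    rw [heq]
    exact aux_trace_nonneg_s11 (hCtpsd.mul_mul_conjTranspose_same _)
  -- case split on σ
  rcases eq_or_lt_of_le hσ0 with hσz | hσpos
  · -- degenerate case σ = 0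
    have hWs0 : ∀ v, Wstar *ᵥ v = 0 := by
      intro v
      have h1 := hσ v
      rw [← hσz, zero_mul] at h1
      have h2 : (0:ℝ) ≤ ∑ j, ((Wstar *ᵥ v) j) ^ 2 :=
        Finset.sum_nonneg fun j _ => sq_nonneg _
      have h3 : Real.sqrt (∑ j, ((Wstar *ᵥ v) j) ^ 2) = 0 :=
        le_antisymm h1 (Real.sqrt_nonneg _)
      have h4 : ∑ j, ((Wstar *ᵥ v) j) ^ 2 = 0 := by
        have := Real.sq_sqrt h2
        rw [h3] at this
        simpa using this.symm
      funext j
      have h5 := (Finset.sum_eq_zero_iff_of_nonneg fun j' _ => sq_nonneg _).1 h4 j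
        (Finset.mem_univ j)
      have := pow_eq_zero_iff (two_ne_zero) |>.1 h5
      simpa using this
    have hη0 : η = 0 := by rw [hη, ← hσz, zero_div]
    have hWzero : ∀ ω (t : ℕ), t ≤ T → W ω t = 0 := by
      intro ω t
      induction t with
      | zero => intro _; exact hW0 ω
      | succ s ih =>
        intro hle
        have hsT : s < T := lt_of_lt_of_le (Nat.lt_succ_self s) hle
        have hrec := hWt ω ⟨s, hsT⟩
        simp only [hη0, zero_smul, sub_zero] at hrec
        exact hrec.trans (ih (le_of_lt hsT))
    have hLeq : ∀ ω : Fin T → Fin m,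
        L ((T:ℝ)⁻¹ • ∑ t : Fin T, W ω (t:ℕ)) - L Wstar = 0 := by
      intro ω
      have hz0 : ∀ t : Fin T, W ω (t:ℕ) = 0 := fun t => hWzero ω t.1 (le_of_lt t.isLt)
      have hz : ((T:ℝ)⁻¹ • ∑ t : Fin T, W ω (t:ℕ)) = 0 := by
        rw [Finset.sum_congr rfl (fun t _ => hz0 t), Finset.sum_const, smul_zero, smul_zero]
      rw [hz, hL 0, hL Wstar, sub_eq_zero]
      congr 1
      exact Finset.sum_congr rfl fun i _ => by rw [Matrix.zero_mulVec, hWs0]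
    rw [Finset.sum_congr rfl (fun ω _ => hLeq ω)]
    simp only [Finset.sum_const_zero, zero_div]
    rw [← hσz, zero_mul, zero_div, zero_mul]
  · -- main case σ > 0
    have hηpos : 0 < η := by rw [hη]; positivity
    set S : Matrix (Fin p) (Fin n) ℝ → ℝ :=
      fun M => ((M - Wstar) * A * (M - Wstar)ᵀ).trace with hSdef
    have hSnonneg : ∀ M, 0 ≤ S M := by
      intro M
      have h := hApsd.mul_mul_conjTranspose_same (M - Wstar)
      rw [aux_conjTranspose_eq_transpose] at h
      exact aux_trace_nonneg_s11 h
    have hS0 : S 0 ≤ σ ^ 2 * A.trace := by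
      have hS0eq : S 0 = (Wstar * A * Wstarᵀ).trace := by
        simp only [hSdef, zero_sub, transpose_neg, Matrix.neg_mul, Matrix.mul_neg, neg_neg]
      rw [hS0eq]
      obtain ⟨R, hRR, hRh⟩ := aux_sqrt_exists hApsd
      have hRsym : Rᵀ = R := aux_transpose_eq_of_isHermitian hRh
      have hRent : ∀ i j, R j i = R i j := by
        intro i j
        have := congrFun (congrFun hRsym i) j
        simpa [Matrix.transpose_apply] using this
      have h1 : (Wstar * A * Wstarᵀ).trace = ((Wstar * R) * (Wstar * R)ᵀ).trace := by
        rw [transpose_mul, hRsym, ← hRR]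
        rw [show Wstar * (R * R) * Wstarᵀ = Wstar * R * (R * Wstarᵀ) by
          simp only [Matrix.mul_assoc]]
      have h2 : ((Wstar * R) * (Wstar * R)ᵀ).trace = ∑ j, ∑ i', ((Wstar * R) i' j) ^ 2 := by
        simp only [Matrix.trace, Matrix.diag, mul_apply, transpose_apply, sq]
        exact Finset.sum_comm
      have h3 : ∀ j, ∑ i', ((Wstar * R) i' j) ^ 2 ≤ σ ^ 2 * ∑ l, (R l j) ^ 2 := by
        intro j
        have hcol : ∀ i', (Wstar * R) i' j = (Wstar *ᵥ fun l => R l j) i' := by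
          intro i'; simp [mul_apply, mulVec, dotProduct]
        have hb := hσ (fun l => R l j)
        have hao : (0:ℝ) ≤ ∑ i', ((Wstar *ᵥ fun l => R l j) i') ^ 2 :=
          Finset.sum_nonneg fun _ _ => sq_nonneg _
        have hbo : (0:ℝ) ≤ ∑ l, (R l j) ^ 2 := Finset.sum_nonneg fun _ _ => sq_nonneg _
        have hsq : ∑ i', ((Wstar *ᵥ fun l => R l j) i') ^ 2 ≤ σ ^ 2 * ∑ l, (R l j) ^ 2 := by
          calc ∑ i', ((Wstar *ᵥ fun l => R l j) i') ^ 2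
              = Real.sqrt (∑ i', ((Wstar *ᵥ fun l => R l j) i') ^ 2)
                * Real.sqrt (∑ i', ((Wstar *ᵥ fun l => R l j) i') ^ 2) :=
                (Real.mul_self_sqrt hao).symm
            _ ≤ (σ * Real.sqrt (∑ l, (R l j) ^ 2)) * (σ * Real.sqrt (∑ l, (R l j) ^ 2)) :=
                mul_self_le_mul_self (Real.sqrt_nonneg _) hb
            _ = σ ^ 2 * (Real.sqrt (∑ l, (R l j) ^ 2) * Real.sqrt (∑ l, (R l j) ^ 2)) := by
                ring
            _ = σ ^ 2 * ∑ l, (R l j) ^ 2 := by rw [Real.mul_self_sqrt hbo]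
        calc ∑ i', ((Wstar * R) i' j) ^ 2
            = ∑ i', ((Wstar *ᵥ fun l => R l j) i') ^ 2 :=
              Finset.sum_congr rfl fun i' _ => by rw [hcol]
          _ ≤ σ ^ 2 * ∑ l, (R l j) ^ 2 := hsq
      calc (Wstar * A * Wstarᵀ).trace = ∑ j, ∑ i', ((Wstar * R) i' j) ^ 2 := by
            rw [h1, h2]
        _ ≤ ∑ j, σ ^ 2 * ∑ l, (R l j) ^ 2 := Finset.sum_le_sum fun j _ => h3 j
        _ = σ ^ 2 * ∑ j, ∑ l, (R l j) ^ 2 := by rw [Finset.mul_sum]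
        _ = σ ^ 2 * A.trace := by
            congr 1
            rw [← hRR]
            simp only [Matrix.trace, Matrix.diag, mul_apply, sq]
            exact Finset.sum_congr rfl fun j _ => Finset.sum_congr rfl fun l _ => by
              rw [hRent l j]
    -- subgradient norm bound
    have hgnorm : ∀ (M : Matrix (Fin p) (Fin n) ℝ) (i : Fin m),
        g M i ⬝ᵥ g M i ≤ ρ ^ 2 := by
      intro M i
      have h1 := hg M i (M *ᵥ x i + g M i)
      have h2 : ∑ j, g M i j * ((M *ᵥ x i + g M i) j - (M *ᵥ x i) j)
          = ∑ j, (g M i j) ^ 2 := by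
        simp [sq]
      rw [h2] at h1
      have h3 := hlip i (M *ᵥ x i + g M i) (M *ᵥ x i)
      have h4 : (∑ j, ((M *ᵥ x i + g M i) j - (M *ᵥ x i) j) ^ 2) = ∑ j, (g M i j) ^ 2 := by
        simp
      rw [h4] at h3
      have h5 : g M i ⬝ᵥ g M i = ∑ j, (g M i j) ^ 2 := by simp [dotProduct, sq]
      have h6 : (0:ℝ) ≤ ∑ j, (g M i j) ^ 2 := Finset.sum_nonneg fun _ _ => sq_nonneg _
      have h7 := Real.sq_sqrt h6
      have h8 := Real.sqrt_nonneg (∑ j, (g M i j) ^ 2)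
      have habs := (abs_le.1 h3).2
      rw [h5]
      have h9 : ∑ j, (g M i j) ^ 2 ≤ ρ * Real.sqrt (∑ j, (g M i j) ^ 2) := by linarith
      have h10 : Real.sqrt (∑ j, (g M i j) ^ 2) ≤ ρ := by
        by_contra hcon
        push_neg at hcon
        have h11 : ρ * Real.sqrt (∑ j, (g M i j) ^ 2)
            < Real.sqrt (∑ j, (g M i j) ^ 2) * Real.sqrt (∑ j, (g M i j) ^ 2) :=
          mul_lt_mul_of_pos_right hcon (lt_of_le_of_lt hρ.le hcon)
        rw [Real.mul_self_sqrt h6] at h11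
        linarith
      calc ∑ j, (g M i j) ^ 2
          = Real.sqrt (∑ j, (g M i j) ^ 2) * Real.sqrt (∑ j, (g M i j) ^ 2) :=
            (Real.mul_self_sqrt h6).symm
        _ ≤ ρ * ρ := mul_self_le_mul_self h8 h10
        _ = ρ ^ 2 := (sq ρ).symm
    -- per-sample quadratic form and its average
    set q : Fin m → ℝ := fun i => x i ⬝ᵥ (A⁻¹ *ᵥ x i) with hqdef
    have hq0 : ∀ i, 0 ≤ q i := by
      intro i
      have := hAinvpos.posSemidef.dotProduct_mulVec_nonneg (x i)
      rwa [star_trivial] at this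
    have hqsum : ∑ i, q i = (m:ℝ) * (A⁻¹ * C).trace := by
      have hACtr : (A⁻¹ * C).trace = (1/(m:ℝ)) * ∑ i, q i := by
        rw [hC, Matrix.mul_smul, trace_smul, Matrix.mul_sum, trace_sum]
        rw [Finset.sum_congr rfl fun i _ => aux_trace_mul_vecMulVec A⁻¹ (x i) (x i)]
        simp [smul_eq_mul, hqdef]
      rw [hACtr]
      field_simp
    -- W ω t depends only on ω restricted to indices < t
    have hWinv : ∀ (t : ℕ), t ≤ T → ∀ ω ω' : Fin T → Fin m,
        (∀ s : Fin T, (s:ℕ) < t → ω s = ω' s) → W ω t = W ω' t := by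
      intro t
      induction t with
      | zero => intro _ ω ω' _; rw [hW0, hW0]
      | succ s ih =>
        intro hle ω ω' hag
        have hsT : s < T := lt_of_lt_of_le (Nat.lt_succ_self s) hle
        have h1 : W ω s = W ω' s :=
          ih (le_of_lt hsT) ω ω' (fun u hu => hag u (hu.trans (Nat.lt_succ_self s)))
        have h2 : ω ⟨s, hsT⟩ = ω' ⟨s, hsT⟩ := hag ⟨s, hsT⟩ (Nat.lt_succ_self s)
        have e1 := hWt ω ⟨s, hsT⟩
        have e2 := hWt ω' ⟨s, hsT⟩
        simp only [Fin.val_mk] at e1 e2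
        rw [e1, e2, h1, h2]
    -- expectation swap lemma
    have hswap : ∀ (t : Fin T) (h : Matrix (Fin p) (Fin n) ℝ → Fin m → ℝ),
        ∑ ω : Fin T → Fin m, ∑ j, h (W ω (t:ℕ)) j
          = (m:ℝ) * ∑ ω : Fin T → Fin m, h (W ω (t:ℕ)) (ω t) := by
      intro t h
      set e := Equiv.funSplitAt t (Fin m) with hedef
      have hkey : ∀ (G : (Fin T → Fin m) → ℝ),
          ∑ ω, G ω = ∑ y : Fin m × ({ j // j ≠ t } → Fin m), G (e.symm y) :=
        fun G => (Equiv.sum_comp e.symm G).symm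
      have hat : ∀ (b : Fin m) (f : { j // j ≠ t } → Fin m), (e.symm (b, f)) t = b := by
        intro b f
        simp [hedef, Equiv.funSplitAt, Equiv.piSplitAt]
      have hWe : ∀ (b c : Fin m) (f : { j // j ≠ t } → Fin m),
          W (e.symm (b, f)) (t:ℕ) = W (e.symm (c, f)) (t:ℕ) := by
        intro b c f
        refine hWinv (t:ℕ) (le_of_lt t.isLt) _ _ ?_
        intro s hs
        have hst : s ≠ t := by
          intro hEq
          rw [hEq] at hs
          exact lt_irrefl _ hs
        simp [hedef, Equiv.funSplitAt, Equiv.piSplitAt, hst]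
      set b0 : Fin m := ⟨0, hm⟩ with hb0
      calc ∑ ω : Fin T → Fin m, ∑ j, h (W ω (t:ℕ)) j
          = ∑ y : Fin m × ({ j // j ≠ t } → Fin m), ∑ j, h (W (e.symm y) (t:ℕ)) j :=
            hkey _
        _ = ∑ b : Fin m, ∑ f : { j // j ≠ t } → Fin m, ∑ j, h (W (e.symm (b, f)) (t:ℕ)) j :=
            Fintype.sum_prod_type _
        _ = ∑ f : { j // j ≠ t } → Fin m, ∑ b : Fin m, ∑ j, h (W (e.symm (b, f)) (t:ℕ)) j :=
            Finset.sum_comm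
        _ = ∑ f : { j // j ≠ t } → Fin m, ∑ b : Fin m, ∑ j, h (W (e.symm (b0, f)) (t:ℕ)) j := by
            exact Finset.sum_congr rfl fun f _ => Finset.sum_congr rfl fun b _ => by
              rw [hWe b b0 f]
        _ = ∑ f : { j // j ≠ t } → Fin m, (m:ℝ) * ∑ j, h (W (e.symm (b0, f)) (t:ℕ)) j := by
            refine Finset.sum_congr rfl fun f _ => ?_
            rw [Finset.sum_const, Finset.card_univ, Fintype.card_fin, nsmul_eq_mul]
        _ = (m:ℝ) * ∑ f : { j // j ≠ t } → Fin m, ∑ j, h (W (e.symm (b0, f)) (t:ℕ)) j := by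
            rw [Finset.mul_sum]
        _ = (m:ℝ) * ∑ f : { j // j ≠ t } → Fin m, ∑ b : Fin m, h (W (e.symm (b, f)) (t:ℕ)) b := by
            congr 1
            exact Finset.sum_congr rfl fun f _ => Finset.sum_congr rfl fun b _ => by
              rw [hWe b b0 f]
        _ = (m:ℝ) * ∑ f : { j // j ≠ t } → Fin m, ∑ b : Fin m,
              h (W (e.symm (b, f)) (t:ℕ)) ((e.symm (b, f)) t) := by
            congr 1
            exact Finset.sum_congr rfl fun f _ => Finset.sum_congr rfl fun b _ => by
              rw [hat b f]
        _ = (m:ℝ) * ∑ b : Fin m, ∑ f : { j // j ≠ t } → Fin m,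
              h (W (e.symm (b, f)) (t:ℕ)) ((e.symm (b, f)) t) := by
            rw [Finset.sum_comm]
        _ = (m:ℝ) * ∑ y : Fin m × ({ j // j ≠ t } → Fin m),
              h (W (e.symm y) (t:ℕ)) ((e.symm y) t) := by
            rw [Fintype.sum_prod_type (f := fun y : Fin m × ({ j // j ≠ t } → Fin m) =>
              h (W (e.symm y) (t:ℕ)) ((e.symm y) t))]
        _ = (m:ℝ) * ∑ ω : Fin T → Fin m, h (W ω (t:ℕ)) (ω t) := by
            rw [← hkey (fun ω => h (W ω (t:ℕ)) (ω t))]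
    -- quadratic expansion
    have hSexp : ∀ (D G : Matrix (Fin p) (Fin n) ℝ),
        ((D - η • G) * A * (D - η • G)ᵀ).trace
          = (D * A * Dᵀ).trace - η * (G * A * Dᵀ).trace - η * (D * A * Gᵀ).trace
            + η ^ 2 * (G * A * Gᵀ).trace := by
      intro D G
      simp only [transpose_sub, transpose_smul, Matrix.sub_mul, Matrix.mul_sub,
        Matrix.smul_mul, Matrix.mul_smul, trace_sub, trace_smul, smul_smul, smul_eq_mul]
      ring
    -- one-step inequality
    have hstep : ∀ (ω : Fin T → Fin m) (t : Fin T),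
        ℓ (ω t) (W ω (t:ℕ) *ᵥ x (ω t)) - ℓ (ω t) (Wstar *ᵥ x (ω t))
          ≤ (S (W ω (t:ℕ)) - S (W ω ((t:ℕ)+1))) / (2*η) + η / 2 * ρ ^ 2 * q (ω t) := by
      intro ω t
      set i := ω t with hidef
      set Wt := W ω (t:ℕ) with hWtd
      set gv := g Wt i with hgvd
      set u := A⁻¹ *ᵥ x i with hud
      set D := Wt - Wstar with hDd
      set G := Matrix.vecMulVec gv u with hGd
      have hqi : x i ⬝ᵥ u = q i := rfl
      have hGA : G * A = Matrix.vecMulVec gv (x i) := by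
        rw [hGd, aux_vecMulVec_mul]
        congr 1
        rw [← Matrix.mulVec_transpose, hAsym, hud, Matrix.mulVec_mulVec, hAAinv,
          Matrix.one_mulVec]
      have hE : (G * A * Dᵀ).trace = gv ⬝ᵥ (D *ᵥ x i) := by
        rw [hGA, Matrix.trace_mul_comm, aux_trace_mul_vecMulVec]
        rw [Matrix.mulVec_transpose, dotProduct_comm, ← Matrix.dotProduct_mulVec]
      have hE2 : (D * A * Gᵀ).trace = gv ⬝ᵥ (D *ᵥ x i) := by
        have htp : (D * A * Gᵀ)ᵀ = G * A * Dᵀ := by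
          rw [transpose_mul, transpose_transpose, transpose_mul, hAsym, ← Matrix.mul_assoc]
        calc (D * A * Gᵀ).trace = ((D * A * Gᵀ)ᵀ).trace := (Matrix.trace_transpose _).symm
          _ = (G * A * Dᵀ).trace := by rw [htp]
          _ = gv ⬝ᵥ (D *ᵥ x i) := hE
      have hQuad : (G * A * Gᵀ).trace = q i * (gv ⬝ᵥ gv) := by
        rw [hGA, hGd, aux_transpose_vecMulVec_s11, aux_trace_mul_vecMulVec,
          aux_vecMulVec_mulVec, dotProduct_smul, smul_eq_mul, hqi]
      have h0 : W ω ((t:ℕ)+1) = Wt - η • G := hWt ω t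
      have hSWt : S Wt = (D * A * Dᵀ).trace := by rw [hDd]
      have hrec : S (W ω ((t:ℕ)+1))
          = S Wt - 2*η*(gv ⬝ᵥ (D *ᵥ x i)) + η^2 * (q i * (gv ⬝ᵥ gv)) := by
        calc S (W ω ((t:ℕ)+1)) = ((D - η • G) * A * (D - η • G)ᵀ).trace := by
              rw [h0]
              show ((Wt - η • G - Wstar) * A * (Wt - η • G - Wstar)ᵀ).trace = _
              rw [sub_right_comm, ← hDd]
          _ = (D * A * Dᵀ).trace - η * (G * A * Dᵀ).trace - η * (D * A * Gᵀ).trace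
              + η ^ 2 * (G * A * Gᵀ).trace := hSexp D G
          _ = S Wt - 2*η*(gv ⬝ᵥ (D *ᵥ x i)) + η^2 * (q i * (gv ⬝ᵥ gv)) := by
              rw [hE, hE2, hQuad, hSWt]
              ring
      have hsub : ℓ i (Wt *ᵥ x i) - ℓ i (Wstar *ᵥ x i) ≤ gv ⬝ᵥ (D *ᵥ x i) := by
        have h1 := hg Wt i (Wstar *ᵥ x i)
        have h3 : ∑ j, gv j * ((Wstar *ᵥ x i) j - (Wt *ᵥ x i) j)
            = - (gv ⬝ᵥ (D *ᵥ x i)) := by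
          rw [hDd, Matrix.sub_mulVec]
          simp only [dotProduct, Pi.sub_apply]
          rw [← Finset.sum_neg_distrib]
          exact Finset.sum_congr rfl fun j _ => by ring
        rw [h3] at h1
        linarith
      have hggn := hgnorm Wt i
      have hqin := hq0 i
      have h2η : (0:ℝ) < 2*η := by linarith
      have hfin : S (W ω ((t:ℕ)+1))
          ≤ S Wt - 2*η*(ℓ i (Wt *ᵥ x i) - ℓ i (Wstar *ᵥ x i)) + η^2 * (ρ^2 * q i) := by
        rw [hrec]
        have t1 : 2*η*(ℓ i (Wt *ᵥ x i) - ℓ i (Wstar *ᵥ x i)) ≤ 2*η*(gv ⬝ᵥ (D *ᵥ x i)) :=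
          mul_le_mul_of_nonneg_left hsub (by positivity)
        have t2 : q i * (gv ⬝ᵥ gv) ≤ q i * ρ^2 :=
          mul_le_mul_of_nonneg_left hggn hqin
        have t3 : η^2 * (q i * (gv ⬝ᵥ gv)) ≤ η^2 * (q i * ρ^2) :=
          mul_le_mul_of_nonneg_left t2 (sq_nonneg η)
        have t4 : η^2 * (q i * ρ^2) = η^2 * (ρ^2 * q i) := by ring
        linarith
      have h6 : (ℓ i (Wt *ᵥ x i) - ℓ i (Wstar *ᵥ x i)) * (2*η)
          ≤ (S Wt - S (W ω ((t:ℕ)+1))) + η^2 * (ρ^2 * q i) := by linarith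
      have h7 : ℓ i (Wt *ᵥ x i) - ℓ i (Wstar *ᵥ x i)
          ≤ ((S Wt - S (W ω ((t:ℕ)+1))) + η^2 * (ρ^2 * q i)) / (2*η) :=
        (le_div_iff₀ h2η).2 h6
      have h8 : ((S Wt - S (W ω ((t:ℕ)+1))) + η^2 * (ρ^2 * q i)) / (2*η)
          = (S Wt - S (W ω ((t:ℕ)+1))) / (2*η) + η / 2 * ρ ^ 2 * q i := by
        field_simp
      rw [h8] at h7
      exact h7
    -- convexity of L
    have hLconv : ConvexOn ℝ Set.univ L := by
      refine ⟨convex_univ, ?_⟩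
      intro W1 _ W2 _ α β hα hβ hαβ
      rw [hL, hL, hL]
      have hptw : ∀ i : Fin m, ℓ i ((α • W1 + β • W2) *ᵥ x i)
          ≤ α * ℓ i (W1 *ᵥ x i) + β * ℓ i (W2 *ᵥ x i) := by
        intro i
        have harg : (α • W1 + β • W2) *ᵥ x i = α • (W1 *ᵥ x i) + β • (W2 *ᵥ x i) := by
          rw [Matrix.add_mulVec, Matrix.smul_mulVec, Matrix.smul_mulVec]
        rw [harg]
        have := (hconv i).2 (Set.mem_univ (W1 *ᵥ x i)) (Set.mem_univ (W2 *ᵥ x i)) hα hβ hαβ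
        simpa using this
      have hsum := Finset.sum_le_sum fun i (_ : i ∈ Finset.univ) => hptw i
      have hco : (0:ℝ) ≤ 1/(m:ℝ) := by positivity
      calc 1/(m:ℝ) * ∑ i, ℓ i ((α • W1 + β • W2) *ᵥ x i)
          ≤ 1/(m:ℝ) * ∑ i, (α * ℓ i (W1 *ᵥ x i) + β * ℓ i (W2 *ᵥ x i)) :=
            mul_le_mul_of_nonneg_left hsum hco
        _ = α • (1/(m:ℝ) * ∑ i, ℓ i (W1 *ᵥ x i)) + β • (1/(m:ℝ) * ∑ i, ℓ i (W2 *ᵥ x i)) := by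
            rw [Finset.sum_add_distrib, ← Finset.mul_sum, ← Finset.mul_sum]
            simp only [smul_eq_mul]
            ring
    have hjensen : ∀ ω : Fin T → Fin m,
        L ((T:ℝ)⁻¹ • ∑ t : Fin T, W ω (t:ℕ)) ≤ (T:ℝ)⁻¹ * ∑ t : Fin T, L (W ω (t:ℕ)) := by
      intro ω
      have hw0 : ∀ t : Fin T, t ∈ Finset.univ → (0:ℝ) ≤ (T:ℝ)⁻¹ := fun _ _ => by positivity
      have hw1 : ∑ t : Fin T, (T:ℝ)⁻¹ = 1 := by
        rw [Finset.sum_const, Finset.card_univ, Fintype.card_fin, nsmul_eq_mul]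
        field_simp
      have hmem : ∀ t : Fin T, t ∈ Finset.univ → W ω (t:ℕ) ∈ Set.univ := fun _ _ =>
        Set.mem_univ _
      have hj := hLconv.map_sum_le hw0 hw1 hmem
      rw [← Finset.smul_sum] at hj
      calc L ((T:ℝ)⁻¹ • ∑ t : Fin T, W ω (t:ℕ)) ≤ ∑ t : Fin T, (T:ℝ)⁻¹ • L (W ω (t:ℕ)) := hj
        _ = (T:ℝ)⁻¹ * ∑ t : Fin T, L (W ω (t:ℕ)) := by
            rw [Finset.mul_sum]
            exact Finset.sum_congr rfl fun t _ => by rw [smul_eq_mul]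
    have hjsum : ∀ ω : Fin T → Fin m,
        L ((T:ℝ)⁻¹ • ∑ t : Fin T, W ω (t:ℕ)) - L Wstar
          ≤ (T:ℝ)⁻¹ * ∑ t : Fin T, (L (W ω (t:ℕ)) - L Wstar) := by
      intro ω
      have h1 := hjensen ω
      have h2 : (T:ℝ)⁻¹ * ∑ t : Fin T, (L (W ω (t:ℕ)) - L Wstar)
          = (T:ℝ)⁻¹ * (∑ t : Fin T, L (W ω (t:ℕ))) - L Wstar := by
        rw [Finset.sum_sub_distrib, Finset.sum_const, Finset.card_univ, Fintype.card_fin,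
          nsmul_eq_mul, mul_sub]
        have h3 : (T:ℝ)⁻¹ * ((T:ℝ) * L Wstar) = L Wstar := by field_simp
        rw [h3]
      linarith
    -- telescoping
    have htel : ∀ ω : Fin T → Fin m,
        ∑ t : Fin T, (S (W ω (t:ℕ)) - S (W ω ((t:ℕ)+1))) = S (W ω 0) - S (W ω T) := by
      intro ω
      rw [Fin.sum_univ_eq_sum_range (fun s => S (W ω s) - S (W ω (s+1))) T]
      exact Finset.sum_range_sub' (fun s => S (W ω s)) T
    -- pathwise regret bound
    have hpath : ∀ ω : Fin T → Fin m,
        ∑ t : Fin T, (ℓ (ω t) (W ω (t:ℕ) *ᵥ x (ω t)) - ℓ (ω t) (Wstar *ᵥ x (ω t)))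
          ≤ σ^2 * A.trace / (2*η) + η / 2 * ρ ^ 2 * ∑ t : Fin T, q (ω t) := by
      intro ω
      have h1 : ∑ t : Fin T, (ℓ (ω t) (W ω (t:ℕ) *ᵥ x (ω t)) - ℓ (ω t) (Wstar *ᵥ x (ω t)))
          ≤ ∑ t : Fin T, ((S (W ω (t:ℕ)) - S (W ω ((t:ℕ)+1))) / (2*η)
              + η / 2 * ρ ^ 2 * q (ω t)) :=
        Finset.sum_le_sum fun t _ => hstep ω t
      have h2 : ∑ t : Fin T, ((S (W ω (t:ℕ)) - S (W ω ((t:ℕ)+1))) / (2*η)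
              + η / 2 * ρ ^ 2 * q (ω t))
          = (S (W ω 0) - S (W ω T)) / (2*η) + η / 2 * ρ ^ 2 * ∑ t : Fin T, q (ω t) := by
        rw [Finset.sum_add_distrib, ← Finset.sum_div, htel ω, Finset.mul_sum]
      have h3 : (S (W ω 0) - S (W ω T)) / (2*η) ≤ σ^2 * A.trace / (2*η) := by
        have hnum : S (W ω 0) - S (W ω T) ≤ σ^2 * A.trace := by
          rw [hW0]
          linarith [hS0, hSnonneg (W ω T)]
        gcongr
      rw [h2] at h1
      linarith
    -- expectation computations
    have hcard : (Finset.univ : Finset (Fin T → Fin m)).card = m ^ T := by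
      rw [Finset.card_univ]
      simp
    have hNpos : (0:ℝ) < (m:ℝ) ^ T := by positivity
    have hqexp : ∀ t : Fin T,
        ∑ ω : Fin T → Fin m, q (ω t) = (m:ℝ)^T * (A⁻¹ * C).trace := by
      intro t
      have h1 := hswap t (fun _ j => q j)
      have h2 : ∑ ω : Fin T → Fin m, ∑ j, q j
          = (m:ℝ) * ((m:ℝ)^T * (A⁻¹*C).trace) := by
        rw [Finset.sum_const, hcard, nsmul_eq_mul, hqsum]
        push_cast
        ring
      rw [h2] at h1
      exact (mul_left_cancel₀ hmR.ne' h1).symm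
    have hLexp : ∀ t : Fin T,
        ∑ ω : Fin T → Fin m, (L (W ω (t:ℕ)) - L Wstar)
          = ∑ ω : Fin T → Fin m,
              (ℓ (ω t) (W ω (t:ℕ) *ᵥ x (ω t)) - ℓ (ω t) (Wstar *ᵥ x (ω t))) := by
      intro t
      have h1 := hswap t (fun M j => ℓ j (M *ᵥ x j) - ℓ j (Wstar *ᵥ x j))
      have h2 : ∀ ω : Fin T → Fin m, L (W ω (t:ℕ)) - L Wstar
          = (1/(m:ℝ)) * ∑ j, (ℓ j (W ω (t:ℕ) *ᵥ x j) - ℓ j (Wstar *ᵥ x j)) := by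
        intro ω
        rw [hL, hL, ← mul_sub, ← Finset.sum_sub_distrib]
      rw [Finset.sum_congr rfl fun ω _ => h2 ω, ← Finset.mul_sum, h1]
      field_simp
    -- main aggregated bound
    have hmain : ∑ ω : Fin T → Fin m, (L ((T:ℝ)⁻¹ • ∑ t : Fin T, W ω (t:ℕ)) - L Wstar)
        ≤ (m:ℝ)^T * (σ^2 * A.trace / (2*η*(T:ℝ)) + η / 2 * ρ^2 * (A⁻¹*C).trace) := by
      calc ∑ ω : Fin T → Fin m, (L ((T:ℝ)⁻¹ • ∑ t : Fin T, W ω (t:ℕ)) - L Wstar)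
          ≤ ∑ ω : Fin T → Fin m, (T:ℝ)⁻¹ * ∑ t : Fin T, (L (W ω (t:ℕ)) - L Wstar) :=
            Finset.sum_le_sum fun ω _ => hjsum ω
        _ = (T:ℝ)⁻¹ * ∑ ω : Fin T → Fin m, ∑ t : Fin T, (L (W ω (t:ℕ)) - L Wstar) := by
            rw [Finset.mul_sum]
        _ = (T:ℝ)⁻¹ * ∑ t : Fin T, ∑ ω : Fin T → Fin m, (L (W ω (t:ℕ)) - L Wstar) := by
            rw [Finset.sum_comm]
        _ = (T:ℝ)⁻¹ * ∑ t : Fin T, ∑ ω : Fin T → Fin m,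
              (ℓ (ω t) (W ω (t:ℕ) *ᵥ x (ω t)) - ℓ (ω t) (Wstar *ᵥ x (ω t))) := by
            rw [Finset.sum_congr rfl fun t _ => hLexp t]
        _ = (T:ℝ)⁻¹ * ∑ ω : Fin T → Fin m, ∑ t : Fin T,
              (ℓ (ω t) (W ω (t:ℕ) *ᵥ x (ω t)) - ℓ (ω t) (Wstar *ᵥ x (ω t))) := by
            rw [Finset.sum_comm]
        _ ≤ (T:ℝ)⁻¹ * ∑ ω : Fin T → Fin m,
              (σ^2 * A.trace / (2*η) + η / 2 * ρ ^ 2 * ∑ t : Fin T, q (ω t)) := by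
            refine mul_le_mul_of_nonneg_left (Finset.sum_le_sum fun ω _ => hpath ω)
              (by positivity)
        _ = (T:ℝ)⁻¹ * ((m:ℝ)^T * (σ^2 * A.trace / (2*η))
              + η / 2 * ρ ^ 2 * ∑ ω : Fin T → Fin m, ∑ t : Fin T, q (ω t)) := by
            rw [Finset.sum_add_distrib, Finset.sum_const, hcard, nsmul_eq_mul,
              ← Finset.mul_sum]
            push_cast
            ring
        _ = (T:ℝ)⁻¹ * ((m:ℝ)^T * (σ^2 * A.trace / (2*η))
              + η / 2 * ρ ^ 2 * ((T:ℝ) * ((m:ℝ)^T * (A⁻¹*C).trace))) := by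
            congr 2
            rw [Finset.sum_comm, Finset.sum_congr rfl fun t _ => hqexp t,
              Finset.sum_const, Finset.card_univ, Fintype.card_fin, nsmul_eq_mul]
        _ = (m:ℝ)^T * (σ^2 * A.trace / (2*η*(T:ℝ)) + η / 2 * ρ^2 * (A⁻¹*C).trace) := by
            field_simp
    -- finish with scalar algebra
    rw [div_le_iff₀ hNpos]
    refine le_trans hmain ?_
    have key : σ^2 * A.trace / (2*η*(T:ℝ)) + η / 2 * ρ^2 * (A⁻¹*C).trace
        = σ*ρ/(2*τ) * (A.trace + (A⁻¹*C).trace) := by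
      rw [hη, ← hττ]
      field_simp
    have hsumtr : A.trace + (A⁻¹*C).trace = B.trace + (B⁻¹*Ct).trace + 2*r := by
      rw [htrA, htrAC, hank, hainvd]
      ring
    rw [key, hsumtr]
    have hX : 0 ≤ B.trace + (B⁻¹*Ct).trace + 2*r := by linarith
    have hc : σ*ρ/(2*τ) ≤ σ*ρ/τ := by
      apply div_le_div_of_nonneg_left (by positivity) hτ
      linarith
    calc (m:ℝ)^T * (σ*ρ/(2*τ) * (B.trace + (B⁻¹*Ct).trace + 2*r))
        ≤ (m:ℝ)^T * (σ*ρ/τ * (B.trace + (B⁻¹*Ct).trace + 2*r)) := by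
          refine mul_le_mul_of_nonneg_left ?_ hNpos.le
          exact mul_le_mul_of_nonneg_right hc hX
      _ = σ * ρ / τ * (B.trace + (B⁻¹ * Ct).trace + 2 * r) * (m:ℝ)^T := by ring
end
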